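/- arXiv:1004.3383 — 3 statements merged into one kernel-verified Lean document; each statement's English description precedes it below -/
import Mathlib

section
/- For every function p in the class P and every positive integer k, there exists a complex number ν with |ν| = 1 such that Σ_{j=1}^{k} (1/j)|p_j − ν^j|^2 ≤ Σ_{j=1}^{k} 1/j, where p_j denotes the j-th Taylor coefficient of p at 0. -/
open intervalIntegral Real Complex MeasureTheory Filter Topology

lemma leung_int_exp (n : ℤ) :
    ∫ θ in (0:ℝ)..(2*Real.pi), Complex.exp (n * θ * Complex.I)
      = if n = 0 then ((2*Real.pi : ℝ) : ℂ) else 0 := by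
  rcases eq_or_ne n 0 with h | h
  · simp [h]
  · have hrw : ∀ θ : ℝ, (n:ℂ) * θ * Complex.I = ((n:ℂ) * Complex.I) * θ := by
      intro θ; ring
    simp_rw [hrw]
    rw [integral_exp_mul_complex (by simp [Complex.ext_iff, h])]
    have h1 : (n:ℂ) * Complex.I * ((2*Real.pi : ℝ) : ℂ) = (n:ℂ) * (2 * Real.pi * Complex.I) := by
      push_cast; ring
    have h2 : (n:ℂ) * Complex.I * ((0:ℝ):ℂ) = 0 := by simp
    rw [if_neg h, h1, h2, Complex.exp_int_mul_two_pi_mul_I, Complex.exp_zero, sub_self,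
      zero_div]

lemma leung_summable {p : ℂ → ℂ} {c : ℕ → ℂ}
    (hp : ∀ z ∈ Metric.ball (0 : ℂ) 1, HasSum (fun j => c j * z ^ j) (p z))
    {r : ℝ} (hr0 : 0 ≤ r) (hr1 : r < 1) :
    Summable (fun m : ℕ => ‖c m‖ * r ^ m) := by
  obtain ⟨r', hrr', hr'1⟩ := exists_between hr1
  have hr'0 : 0 < r' := lt_of_le_of_lt hr0 hrr'
  have hmem : ((r' : ℂ)) ∈ Metric.ball (0:ℂ) 1 := by
    simp [Complex.norm_real, abs_of_pos hr'0, hr'1]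
  have hs : Summable (fun m : ℕ => c m * (r' : ℂ) ^ m) := (hp _ hmem).summable
  have hbdd : ∃ C : ℝ, ∀ m : ℕ, ‖c m‖ * r' ^ m ≤ C := by
    have h0 : Filter.Tendsto (fun m : ℕ => ‖c m * (r' : ℂ) ^ m‖) atTop (nhds 0) := by
      simpa using hs.tendsto_atTop_zero.norm
    obtain ⟨C, hC⟩ := h0.bddAbove_range
    refine ⟨C, fun m => ?_⟩
    have := hC ⟨m, rfl⟩
    simpa [norm_mul, norm_pow, Complex.norm_real, abs_of_pos hr'0] using this
  obtain ⟨C, hC⟩ := hbdd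
  have hC0 : 0 ≤ C := le_trans (by positivity) (hC 0)
  have hgeo : Summable (fun m : ℕ => C * (r / r') ^ m) := by
    apply Summable.mul_left
    exact summable_geometric_of_lt_one (by positivity) (by
      rw [div_lt_one hr'0]; exact hrr')
  refine hgeo.of_nonneg_of_le (fun m => by positivity) (fun m => ?_)
  have hne : (r' : ℝ) ≠ 0 := ne_of_gt hr'0
  have h1 : ‖c m‖ * r ^ m = (‖c m‖ * r' ^ m) * (r / r') ^ m := by
    rw [div_pow, mul_assoc, mul_div_assoc']
    rw [mul_comm (r' ^ m) (r ^ m), mul_div_assoc, div_self (pow_ne_zero m hne), mul_one]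
  rw [h1]
  gcongr
  exact hC m

lemma leung_key {p : ℂ → ℂ} {c : ℕ → ℂ}
    (hp : ∀ z ∈ Metric.ball (0 : ℂ) 1, HasSum (fun j => c j * z ^ j) (p z))
    {r : ℝ} (hr0 : 0 ≤ r) (hr1 : r < 1) (n : ℤ) :
    ∫ θ in (0:ℝ)..(2*Real.pi), p ((r:ℂ) * Complex.exp (θ * Complex.I)) * Complex.exp (n * θ * Complex.I)
      = ∑' m : ℕ, (c m * (r:ℂ) ^ m) * (if (m:ℤ) + n = 0 then ((2*Real.pi : ℝ) : ℂ) else 0) := by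
  have hmem : ∀ θ : ℝ, (r:ℂ) * Complex.exp (θ * Complex.I) ∈ Metric.ball (0:ℂ) 1 := by
    intro θ
    simp only [Metric.mem_ball, dist_zero_right, norm_mul, Complex.norm_exp_ofReal_mul_I,
      mul_one, Complex.norm_real, Real.norm_eq_abs]
    rwa [_root_.abs_of_nonneg hr0]
  have hexpnorm : ∀ (q : ℤ) (θ : ℝ), ‖Complex.exp ((q:ℂ) * θ * Complex.I)‖ = 1 := by
    intro q θ
    have : ((q:ℂ)) * θ * Complex.I = ((q * θ : ℝ) : ℂ) * Complex.I := by push_cast; ring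
    rw [this, Complex.norm_exp_ofReal_mul_I]
  set F : ℕ → C(ℝ, ℂ) := fun m =>
    ⟨fun θ => c m * ((r:ℂ) * Complex.exp (θ * Complex.I)) ^ m * Complex.exp (n * θ * Complex.I),
     by fun_prop⟩ with hF
  have hFnorm : ∀ (m : ℕ) (θ : ℝ), ‖F m θ‖ = ‖c m‖ * r ^ m := by
    intro m θ
    simp only [hF, ContinuousMap.coe_mk, norm_mul, norm_pow, Complex.norm_exp_ofReal_mul_I,
      hexpnorm n θ, mul_one, Complex.norm_real, Real.norm_eq_abs, _root_.abs_of_nonneg hr0]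
  have hsum := leung_summable hp hr0 hr1
  haveI : Nonempty (⟨Set.uIcc (0:ℝ) (2*Real.pi), isCompact_uIcc⟩ : TopologicalSpace.Compacts ℝ) :=
    ⟨⟨0, Set.left_mem_uIcc⟩⟩
  have hsum2 : Summable fun m : ℕ =>
      ‖(F m).restrict (⟨Set.uIcc (0:ℝ) (2*Real.pi), isCompact_uIcc⟩ : TopologicalSpace.Compacts ℝ)‖ := by
    refine hsum.of_nonneg_of_le (fun m => norm_nonneg _) (fun m => ?_)
    rw [ContinuousMap.norm_le _ (by positivity)]
    intro x
    rw [ContinuousMap.restrict_apply]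
    exact le_of_eq (hFnorm m x)
  calc
    ∫ θ in (0:ℝ)..(2*Real.pi), p ((r:ℂ) * Complex.exp (θ * Complex.I)) * Complex.exp (n * θ * Complex.I)
        = ∫ θ in (0:ℝ)..(2*Real.pi), ∑' m : ℕ, F m θ := by
          refine intervalIntegral.integral_congr fun θ _ => ?_
          exact (((hp _ (hmem θ)).mul_right _).tsum_eq).symm
    _ = ∑' m : ℕ, ∫ θ in (0:ℝ)..(2*Real.pi), F m θ :=
          (intervalIntegral.tsum_intervalIntegral_eq_of_summable_norm hsum2).symm
    _ = ∑' m : ℕ, (c m * (r:ℂ) ^ m) * (if (m:ℤ) + n = 0 then ((2*Real.pi : ℝ) : ℂ) else 0) := by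
          refine tsum_congr fun m => ?_
          have hrw : ∀ θ : ℝ, F m θ
              = (c m * (r:ℂ) ^ m) * Complex.exp ((((m:ℤ) + n : ℤ) : ℂ) * θ * Complex.I) := by
            intro θ
            have hexp : ((((m:ℤ) + n : ℤ)) : ℂ) * θ * Complex.I
                = (m:ℂ) * (θ * Complex.I) + (n:ℂ) * θ * Complex.I := by push_cast; ring
            simp only [hF, ContinuousMap.coe_mk, mul_pow, ← Complex.exp_nat_mul, hexp,
              Complex.exp_add]
            ring
          simp_rw [hrw]
          rw [intervalIntegral.integral_const_mul, leung_int_exp ((m:ℤ) + n)]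

lemma leung_keyA {p : ℂ → ℂ} {c : ℕ → ℂ}
    (hp : ∀ z ∈ Metric.ball (0 : ℂ) 1, HasSum (fun j => c j * z ^ j) (p z))
    {r : ℝ} (hr0 : 0 ≤ r) (hr1 : r < 1) (n : ℕ) :
    ∫ θ in (0:ℝ)..(2*Real.pi),
        p ((r:ℂ) * Complex.exp (θ * Complex.I)) * Complex.exp (-(n:ℂ) * θ * Complex.I)
      = ((2*Real.pi : ℝ) : ℂ) * (c n * (r:ℂ) ^ n) := by
  have h := leung_key hp hr0 hr1 (-(n:ℤ))
  have hcast : ((-(n:ℤ) : ℤ) : ℂ) = -(n:ℂ) := by push_cast; ring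
  rw [hcast] at h
  rw [h]
  have hif : ∀ m : ℕ, (c m * (r:ℂ) ^ m) * (if (m:ℤ) + -(n:ℤ) = 0 then ((2*Real.pi : ℝ) : ℂ) else 0)
      = if m = n then ((2*Real.pi : ℝ) : ℂ) * (c n * (r:ℂ) ^ n) else 0 := by
    intro m
    by_cases hmn : m = n
    · subst hmn; simp [mul_comm]
    · have hne : ¬((m:ℤ) + -(n:ℤ) = 0) := by omega
      simp [hne, hmn]
  simp_rw [hif]
  exact tsum_ite_eq n _

lemma leung_keyB {p : ℂ → ℂ} {c : ℕ → ℂ}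
    (hp : ∀ z ∈ Metric.ball (0 : ℂ) 1, HasSum (fun j => c j * z ^ j) (p z))
    {r : ℝ} (hr0 : 0 ≤ r) (hr1 : r < 1) {n : ℕ} (hn : 1 ≤ n) :
    ∫ θ in (0:ℝ)..(2*Real.pi),
        p ((r:ℂ) * Complex.exp (θ * Complex.I)) * Complex.exp ((n:ℂ) * θ * Complex.I) = 0 := by
  have h := leung_key hp hr0 hr1 (n:ℤ)
  have hcast : (((n:ℤ) : ℤ) : ℂ) = (n:ℂ) := by push_cast; ring
  rw [hcast] at h
  rw [h]
  have hif : ∀ m : ℕ, (c m * (r:ℂ) ^ m) * (if (m:ℤ) + (n:ℤ) = 0 then ((2*Real.pi : ℝ) : ℂ) else 0)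
      = 0 := by
    intro m
    have hne : ¬((m:ℤ) + (n:ℤ) = 0) := by omega
    simp [hne]
  simp_rw [hif]
  exact tsum_zero

lemma leung_cont {p : ℂ → ℂ} {c : ℕ → ℂ}
    (hp : ∀ z ∈ Metric.ball (0 : ℂ) 1, HasSum (fun j => c j * z ^ j) (p z))
    {r : ℝ} (hr0 : 0 ≤ r) (hr1 : r < 1) :
    Continuous fun θ : ℝ => p ((r:ℂ) * Complex.exp (θ * Complex.I)) := by
  have hmem : ∀ θ : ℝ, (r:ℂ) * Complex.exp (θ * Complex.I) ∈ Metric.ball (0:ℂ) 1 := by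
    intro θ
    simp only [Metric.mem_ball, dist_zero_right, norm_mul, Complex.norm_exp_ofReal_mul_I,
      mul_one, Complex.norm_real, Real.norm_eq_abs]
    rwa [_root_.abs_of_nonneg hr0]
  have hcont : Continuous fun θ : ℝ => ∑' m : ℕ, c m * ((r:ℂ) * Complex.exp (θ * Complex.I)) ^ m := by
    refine continuous_tsum (fun m => by fun_prop) (leung_summable hp hr0 hr1) (fun m θ => ?_)
    rw [norm_mul, norm_pow, norm_mul, Complex.norm_exp_ofReal_mul_I, mul_one,
      Complex.norm_real, Real.norm_eq_abs, _root_.abs_of_nonneg hr0]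
  exact hcont.congr (fun θ => (hp _ (hmem θ)).tsum_eq)

/-- Lemma 2.2 (Leung): For every p in the class P (analytic in the unit disk,
p(0) = 1, Re p > 0) and every positive integer k, there exists ν with |ν| = 1 such that
Σ_{j=1}^k (1/j)|p_j − ν^j|² ≤ Σ_{j=1}^k 1/j. -/
theorem caratheodory_successive_coeff_bound
    (p : ℂ → ℂ) (c : ℕ → ℂ) (hc0 : c 0 = 1)
    (hp : ∀ z ∈ Metric.ball (0 : ℂ) 1, HasSum (fun j => c j * z ^ j) (p z))
    (hre : ∀ z ∈ Metric.ball (0 : ℂ) 1, 0 < (p z).re)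
    (k : ℕ) (hk : 1 ≤ k) :
    ∃ ν : ℂ, ‖ν‖ = 1 ∧
      ∑ j ∈ Finset.Icc 1 k, (1 / (j : ℝ)) * ‖c j - ν ^ j‖ ^ 2 ≤
        ∑ j ∈ Finset.Icc 1 k, (1 / (j : ℝ)) := by
  have hπ : (0:ℝ) < Real.pi := Real.pi_pos
  -- the test function g and its maximizer
  set g : ℝ → ℝ := fun θ =>
    ∑ j ∈ Finset.Icc 1 k, (1 / (j : ℝ)) *
      ((starRingEnd ℂ) (c j) * Complex.exp (-(j:ℂ) * θ * Complex.I)).re with hg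
  have hgcont : Continuous g := by
    apply continuous_finset_sum
    intro j _
    apply Continuous.mul continuous_const
    apply Complex.continuous_re.comp
    apply Continuous.mul continuous_const
    apply Complex.continuous_exp.comp
    fun_prop
  obtain ⟨θ₀, hθ₀mem, hmax⟩ :=
    (isCompact_Icc : IsCompact (Set.Icc (0:ℝ) (2*Real.pi))).exists_isMaxOn
      ⟨0, by constructor <;> [rfl; positivity]⟩ hgcont.continuousOn
  have hmax' : ∀ x ∈ Set.Icc (0:ℝ) (2*Real.pi), g x ≤ g θ₀ := fun x hx => hmax hx
  set ν : ℂ := Complex.exp (-(θ₀:ℂ) * Complex.I) with hν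
  have hνnorm : ‖ν‖ = 1 := by
    rw [hν, show -(θ₀:ℂ) * Complex.I = ((-θ₀ : ℝ) : ℂ) * Complex.I by push_cast; ring,
      Complex.norm_exp_ofReal_mul_I]
  have hνpow : ∀ j : ℕ, ν ^ j = Complex.exp (-(j:ℂ) * θ₀ * Complex.I) := by
    intro j
    rw [hν, ← Complex.exp_nat_mul]
    congr 1
    push_cast
    ring
  -- the main estimate for each radius r < 1
  have main : ∀ r : ℝ, r ∈ Set.Ioo (0:ℝ) 1 →
      Real.pi * (∑ j ∈ Finset.Icc 1 k, (1 / (j : ℝ)) * ‖c j‖^2 * r^j)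
        ≤ g θ₀ * (2*Real.pi) := by
    rintro r ⟨hr0, hr1⟩
    have hmem : ∀ θ : ℝ, (r:ℂ) * Complex.exp (θ * Complex.I) ∈ Metric.ball (0:ℂ) 1 := by
      intro θ
      simp only [Metric.mem_ball, dist_zero_right, norm_mul, Complex.norm_exp_ofReal_mul_I,
        mul_one, Complex.norm_real, Real.norm_eq_abs]
      rwa [_root_.abs_of_nonneg hr0.le]
    set w : ℝ → ℝ := fun θ => (p ((r:ℂ) * Complex.exp (θ * Complex.I))).re with hw
    have hpcont : Continuous fun θ : ℝ => p ((r:ℂ) * Complex.exp (θ * Complex.I)) :=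
      leung_cont hp hr0.le hr1
    have hwcont : Continuous w := Complex.continuous_re.comp hpcont
    have hwnonneg : ∀ θ : ℝ, 0 ≤ w θ := fun θ => (hre _ (hmem θ)).le
    have hecont : ∀ a : ℂ, Continuous fun θ : ℝ => Complex.exp (a * θ * Complex.I) := by
      intro a; fun_prop
    -- total mass
    have hIp : ∫ θ in (0:ℝ)..(2*Real.pi), p ((r:ℂ) * Complex.exp (θ * Complex.I))
        = ((2*Real.pi : ℝ) : ℂ) := by
      have h0 := leung_keyA hp hr0.le hr1 0
      simpa [hc0] using h0
    have hIw : ∫ θ in (0:ℝ)..(2*Real.pi), w θ = 2*Real.pi := by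
      have h1 := Complex.reCLM.intervalIntegral_comp_comm
        (hpcont.intervalIntegrable (μ := MeasureTheory.volume) 0 (2*Real.pi))
      simp only [Complex.reCLM_apply] at h1
      rw [hw]
      rw [h1, hIp, Complex.ofReal_re]
    -- Fourier coefficients of w
    have hwfour : ∀ j : ℕ, 1 ≤ j →
        ∫ θ in (0:ℝ)..(2*Real.pi),
            ((w θ : ℝ) : ℂ) * Complex.exp (-(j:ℂ) * θ * Complex.I)
          = ((Real.pi : ℝ) : ℂ) * (c j * (r:ℂ) ^ j) := by
      intro j hj
      have hsplit : ∀ θ : ℝ, ((w θ : ℝ) : ℂ) * Complex.exp (-(j:ℂ) * θ * Complex.I)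
          = (p ((r:ℂ) * Complex.exp (θ * Complex.I)) * Complex.exp (-(j:ℂ) * θ * Complex.I)) / 2
            + ((starRingEnd ℂ) (p ((r:ℂ) * Complex.exp (θ * Complex.I))
                * Complex.exp ((j:ℂ) * θ * Complex.I))) / 2 := by
        intro θ
        have hconjexp : (starRingEnd ℂ) (Complex.exp ((j:ℂ) * θ * Complex.I))
            = Complex.exp (-(j:ℂ) * θ * Complex.I) := by
          rw [← Complex.exp_conj]
          congr 1
          simp [Complex.ext_iff]
        rw [map_mul, hconjexp]
        have : ((w θ : ℝ) : ℂ)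
            = (p ((r:ℂ) * Complex.exp (θ * Complex.I))
              + (starRingEnd ℂ) (p ((r:ℂ) * Complex.exp (θ * Complex.I)))) / 2 := by
          rw [Complex.add_conj, hw]
          push_cast
          ring
        rw [this]
        ring
      simp_rw [hsplit]
      rw [intervalIntegral.integral_add, intervalIntegral.integral_div,
        intervalIntegral.integral_div]
      · have hA := leung_keyA hp hr0.le hr1 j
        have hB := leung_keyB hp hr0.le hr1 hj
        have hconjint : ∫ θ in (0:ℝ)..(2*Real.pi),
            (starRingEnd ℂ) (p ((r:ℂ) * Complex.exp (θ * Complex.I))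
              * Complex.exp ((j:ℂ) * θ * Complex.I))
            = (starRingEnd ℂ) (∫ θ in (0:ℝ)..(2*Real.pi),
                p ((r:ℂ) * Complex.exp (θ * Complex.I))
                  * Complex.exp ((j:ℂ) * θ * Complex.I)) := by
          have h2 := Complex.conjCLE.toContinuousLinearMap.intervalIntegral_comp_comm
            ((hpcont.mul (hecont ((j:ℂ)))).intervalIntegrable (μ := MeasureTheory.volume) 0 (2*Real.pi))
          simpa using h2
        rw [hA, hconjint, hB, map_zero, zero_div, add_zero]
        push_cast
        ring
      · exact ((hpcont.mul (hecont _)).div_const 2).intervalIntegrable (μ := MeasureTheory.volume) 0 (2*Real.pi)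
      · refine (Continuous.div_const ?_ 2).intervalIntegrable (μ := MeasureTheory.volume) 0 (2*Real.pi)
        exact Complex.continuous_conj.comp (hpcont.mul (hecont _))
    -- the weighted integral
    have hGW : ∫ θ in (0:ℝ)..(2*Real.pi), g θ * w θ
        = Real.pi * ∑ j ∈ Finset.Icc 1 k, (1 / (j : ℝ)) * ‖c j‖^2 * r^j := by
      have hterm : ∀ θ : ℝ, g θ * w θ = ∑ j ∈ Finset.Icc 1 k,
          (1 / (j : ℝ)) * ((starRingEnd ℂ) (c j)
            * (((w θ : ℝ) : ℂ) * Complex.exp (-(j:ℂ) * θ * Complex.I))).re := by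
        intro θ
        rw [hg, Finset.sum_mul]
        refine Finset.sum_congr rfl fun j hj => ?_
        rw [mul_assoc]
        congr 1
        rw [show (starRingEnd ℂ) (c j) * (((w θ : ℝ) : ℂ) * Complex.exp (-(j:ℂ) * θ * Complex.I))
            = ((w θ : ℝ) : ℂ) * ((starRingEnd ℂ) (c j) * Complex.exp (-(j:ℂ) * θ * Complex.I))
          by ring, Complex.re_ofReal_mul, mul_comm]
      simp_rw [hterm]
      rw [intervalIntegral.integral_finset_sum]
      swap
      · intro j hj
        apply Continuous.intervalIntegrable
        apply Continuous.mul continuous_const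
        apply Complex.continuous_re.comp
        apply Continuous.mul continuous_const
        exact (Complex.continuous_ofReal.comp hwcont).mul (hecont _)
      have hsummand : ∀ j ∈ Finset.Icc 1 k,
          (∫ x in (0:ℝ)..(2*Real.pi), (1 / (j : ℝ)) * ((starRingEnd ℂ) (c j)
            * (((w x : ℝ) : ℂ) * Complex.exp (-(j:ℂ) * x * Complex.I))).re)
          = Real.pi * ((1 / (j : ℝ)) * ‖c j‖^2 * r^j) := by
        intro j hj
        have hj1 : 1 ≤ j := (Finset.mem_Icc.mp hj).1
        have hcontj : Continuous fun θ : ℝ => (starRingEnd ℂ) (c j)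
            * (((w θ : ℝ) : ℂ) * Complex.exp (-(j:ℂ) * θ * Complex.I)) :=
          continuous_const.mul ((Complex.continuous_ofReal.comp hwcont).mul (hecont _))
        have hre2 := Complex.reCLM.intervalIntegral_comp_comm
          (hcontj.intervalIntegrable (μ := MeasureTheory.volume) 0 (2*Real.pi))
        simp only [Complex.reCLM_apply] at hre2
        rw [intervalIntegral.integral_const_mul, hre2,
          intervalIntegral.integral_const_mul, hwfour j hj1]
        rw [show (starRingEnd ℂ) (c j) * (((Real.pi : ℝ) : ℂ) * (c j * (r:ℂ) ^ j))
            = ((Real.pi * r ^ j : ℝ) : ℂ) * (c j * (starRingEnd ℂ) (c j)) by push_cast; ring,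
          Complex.mul_conj, ← Complex.ofReal_mul, Complex.ofReal_re,
          Complex.normSq_eq_norm_sq]
        ring
      rw [Finset.sum_congr rfl hsummand, ← Finset.mul_sum]
    -- compare with the constant g θ₀
    have hle : ∫ θ in (0:ℝ)..(2*Real.pi), g θ * w θ
        ≤ ∫ θ in (0:ℝ)..(2*Real.pi), g θ₀ * w θ := by
      apply intervalIntegral.integral_mono_on (by positivity)
      · exact (hgcont.mul hwcont).intervalIntegrable 0 (2*Real.pi)
      · exact (continuous_const.mul hwcont).intervalIntegrable 0 (2*Real.pi)
      · intro x hx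
        exact mul_le_mul_of_nonneg_right (hmax' x hx) (hwnonneg x)
    rw [hGW] at hle
    rwa [intervalIntegral.integral_const_mul, hIw] at hle
  -- pass to the limit r → 1⁻
  have hlim : Real.pi * (∑ j ∈ Finset.Icc 1 k, (1 / (j : ℝ)) * ‖c j‖^2)
      ≤ g θ₀ * (2*Real.pi) := by
    have hcont : Continuous fun r : ℝ =>
        Real.pi * ∑ j ∈ Finset.Icc 1 k, (1 / (j : ℝ)) * ‖c j‖^2 * r^j := by
      apply Continuous.mul continuous_const
      apply continuous_finset_sum
      intro j _
      exact continuous_const.mul (continuous_pow j)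
    have hten : Tendsto (fun r : ℝ =>
        Real.pi * ∑ j ∈ Finset.Icc 1 k, (1 / (j : ℝ)) * ‖c j‖^2 * r^j)
        (nhdsWithin 1 (Set.Iio 1)) (nhds
          (Real.pi * ∑ j ∈ Finset.Icc 1 k, (1 / (j : ℝ)) * ‖c j‖^2 * (1:ℝ)^j)) :=
      (hcont.tendsto 1).mono_left nhdsWithin_le_nhds
    have heq : ∀ j : ℕ, (1 / (j : ℝ)) * ‖c j‖^2 * (1:ℝ)^j = (1 / (j : ℝ)) * ‖c j‖^2 := by
      intro j; rw [one_pow, mul_one]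
    simp only [heq] at hten
    refine le_of_tendsto hten ?_
    filter_upwards [Ioo_mem_nhdsLT_of_mem (show (1:ℝ) ∈ Set.Ioc 0 1 from ⟨one_pos, le_refl 1⟩)]
      with r hr using main r hr
  have h2 : ∑ j ∈ Finset.Icc 1 k, (1 / (j : ℝ)) * ‖c j‖^2 ≤ 2 * g θ₀ := by
    nlinarith [hlim, hπ]
  -- conclude
  refine ⟨ν, hνnorm, ?_⟩
  have hgθ₀ : g θ₀ = ∑ j ∈ Finset.Icc 1 k,
      (1 / (j : ℝ)) * ((starRingEnd ℂ) (c j) * ν ^ j).re := by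
    rw [hg]
    refine Finset.sum_congr rfl fun j hj => ?_
    rw [hνpow j]
  have hexpand : ∀ j ∈ Finset.Icc 1 k, ‖c j - ν ^ j‖^2
      = ‖c j‖^2 - 2 * ((starRingEnd ℂ) (c j) * ν ^ j).re + 1 := by
    intro j hj
    have hb : Complex.normSq (ν ^ j) = 1 := by
      rw [Complex.normSq_eq_norm_sq, norm_pow, hνnorm, one_pow, one_pow]
    have hre' : ((c j) * (starRingEnd ℂ) (ν ^ j)).re
        = ((starRingEnd ℂ) (c j) * ν ^ j).re := by
      rw [← Complex.conj_re ((starRingEnd ℂ) (c j) * ν ^ j), map_mul, Complex.conj_conj]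
    rw [show ‖c j - ν ^ j‖^2 = Complex.normSq (c j - ν ^ j) by
        rw [Complex.normSq_eq_norm_sq],
      Complex.normSq_sub, hb, hre',
      show Complex.normSq (c j) = ‖c j‖^2 by
        rw [Complex.normSq_eq_norm_sq]]
    ring
  calc ∑ j ∈ Finset.Icc 1 k, (1 / (j : ℝ)) * ‖c j - ν ^ j‖ ^ 2
      = ∑ j ∈ Finset.Icc 1 k, ((1 / (j : ℝ)) * ‖c j‖^2
          - 2 * ((1 / (j : ℝ)) * ((starRingEnd ℂ) (c j) * ν ^ j).re)
          + (1 / (j : ℝ))) := by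
        refine Finset.sum_congr rfl fun j hj => ?_
        rw [hexpand j hj]
        ring
    _ = (∑ j ∈ Finset.Icc 1 k, (1 / (j : ℝ)) * ‖c j‖^2) - 2 * g θ₀
          + ∑ j ∈ Finset.Icc 1 k, (1 / (j : ℝ)) := by
        rw [Finset.sum_add_distrib, Finset.sum_sub_distrib, ← Finset.mul_sum, hgθ₀]
    _ ≤ ∑ j ∈ Finset.Icc 1 k, (1 / (j : ℝ)) := by linarith [h2]
end

section
/- Let n ∈ ℕ and let f ∈ S_n with Taylor expansion f(z) = z + Σ_{k≥2} a_k z^k. Then for every integer k ≥ 2, |a_k| ≤ k^{1−n}. -/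
open Complex MeasureTheory Metric Real Filter

noncomputable section
namespace SalCoeff

lemma summable_norm_coeff {c : ℕ → ℂ} {F : ℂ → ℂ}
    (hF : ∀ z ∈ Metric.ball (0 : ℂ) 1, HasSum (fun k => c k * z ^ k) (F z))
    {r : ℝ} (hr0 : 0 ≤ r) (hr1 : r < 1) :
    Summable (fun k => ‖c k‖ * r ^ k) := by
  set s : ℝ := (r + 1) / 2 with hs
  have hrs : r < s := by rw [hs]; linarith
  have hs1 : s < 1 := by rw [hs]; linarith
  have hs0 : 0 < s := by rw [hs]; linarith
  have hz : (s : ℂ) ∈ Metric.ball (0 : ℂ) 1 := by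
    simp only [mem_ball, dist_zero_right, Complex.norm_real, Real.norm_eq_abs,
      _root_.abs_of_nonneg hs0.le]
    exact hs1
  have hsum : Summable (fun k => c k * (s : ℂ) ^ k) := (hF _ hz).summable
  have htend : Tendsto (fun k => ‖c k * (s : ℂ) ^ k‖) atTop (nhds 0) := by
    simpa using hsum.tendsto_atTop_zero.norm
  obtain ⟨M, hM⟩ := htend.bddAbove_range
  have hM' : ∀ k, ‖c k‖ * s ^ k ≤ M := by
    intro k
    have := hM (Set.mem_range_self k)
    simpa [norm_mul, norm_pow, Complex.norm_real, _root_.abs_of_nonneg hs0.le] using this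
  have hgeom : Summable (fun k : ℕ => M * (r / s) ^ k) :=
    (summable_geometric_of_lt_one (by positivity) (by
      rw [div_lt_one hs0]; exact hrs)).mul_left M
  refine Summable.of_nonneg_of_le (fun k => by positivity) (fun k => ?_) hgeom
  have hrk : r ^ k = s ^ k * (r / s) ^ k := by
    have : s ≠ 0 := ne_of_gt hs0
    rw [div_pow r s k, mul_div_cancel₀ _ (pow_ne_zero k this)]
  rw [hrk, ← mul_assoc]
  exact mul_le_mul_of_nonneg_right (hM' k) (by positivity)

end SalCoeff

namespace Test
open FormalMultilinearSeries
lemma hasFPS {c : ℕ → ℂ} {F : ℂ → ℂ}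
    (hF : ∀ z ∈ Metric.ball (0 : ℂ) 1, HasSum (fun k => c k * z ^ k) (F z)) :
    HasFPowerSeriesOnBall F (ofScalars ℂ c) 0 1 := by
  refine ⟨?_, one_pos, ?_⟩
  · refine ENNReal.le_of_forall_nnreal_lt fun r hr => ?_
    apply le_radius_of_summable_norm
    have h1 : Summable (fun k => ‖c k‖ * (r : ℝ) ^ k) :=
      SalCoeff.summable_norm_coeff hF r.coe_nonneg (by exact_mod_cast hr)
    refine Summable.of_nonneg_of_le (fun k => by positivity) (fun k => ?_) h1
    refine mul_le_mul_of_nonneg_right ?_ (by positivity)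
    calc ‖ofScalars ℂ c k‖ ≤ ‖c k‖ * ‖ContinuousMultilinearMap.mkPiAlgebraFin ℂ k ℂ‖ := by
          exact (norm_smul_le (c k) (ContinuousMultilinearMap.mkPiAlgebraFin ℂ k ℂ))
      _ ≤ ‖c k‖ * 1 := by
          refine mul_le_mul_of_nonneg_left ?_ (norm_nonneg _)
          refine ContinuousMultilinearMap.norm_mkPiAlgebraFin_le.trans ?_
          simp
      _ = ‖c k‖ := mul_one _
  · intro y hy
    have hy' : y ∈ Metric.ball (0 : ℂ) 1 := by
      simpa [Metric.emetric_ball_nnreal, ← ofReal_norm, ENNReal.ofReal_lt_one] using hy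
    have := hF y hy'
    simp only [ofScalars_apply_eq, zero_add, smul_eq_mul]
    exact this

lemma intExp (j : ℤ) :
    (∫ θ in (0:ℝ)..(2 * π), Complex.exp ((j : ℂ) * θ * Complex.I)) =
      if j = 0 then (2 * π : ℂ) else 0 := by
  rcases eq_or_ne j 0 with hj | hj
  · simp [hj]
  · rw [if_neg hj]
    have hc : (j : ℂ) * Complex.I ≠ 0 := by
      simp [Complex.I_ne_zero, hj]
    have : ∀ θ : ℝ, (j : ℂ) * (θ : ℂ) * Complex.I = ((j : ℂ) * Complex.I) * (θ : ℂ) := by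
      intro θ; ring
    simp_rw [this]
    rw [integral_exp_mul_complex hc]
    have h2 : (j : ℂ) * Complex.I * (2 * π : ℝ) = (j : ℂ) * (2 * π * Complex.I) := by
      push_cast; ring
    rw [h2, Complex.exp_int_mul_two_pi_mul_I]
    simp

lemma fourier_general {c : ℕ → ℂ} {F : ℂ → ℂ}
    (hF : ∀ z ∈ Metric.ball (0 : ℂ) 1, HasSum (fun k => c k * z ^ k) (F z))
    {r : ℝ} (hr0 : 0 ≤ r) (hr1 : r < 1) (m : ℤ) :
    (∫ θ in (0:ℝ)..(2 * π),
        F ((r : ℂ) * Complex.exp (θ * Complex.I)) * Complex.exp ((m : ℂ) * θ * Complex.I)) =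
      ∑' k : ℕ, c k * (r : ℂ) ^ k * (if ((k : ℤ) + m) = 0 then (2 * π : ℂ) else 0) := by
  set g : ℕ → ℝ → ℂ := fun k θ =>
    c k * (r : ℂ) ^ k * Complex.exp ((((k : ℤ) + m : ℤ) : ℂ) * θ * Complex.I) with hg
  have habs : ∀ θ : ℝ, ‖Complex.exp ((θ : ℂ) * Complex.I)‖ = 1 := fun θ =>
    Complex.norm_exp_ofReal_mul_I θ
  have hmem : ∀ θ : ℝ, (r : ℂ) * Complex.exp ((θ : ℂ) * Complex.I) ∈ Metric.ball (0 : ℂ) 1 := by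
    intro θ
    simp only [mem_ball, dist_zero_right, norm_mul, Complex.norm_real, Real.norm_eq_abs,
      _root_.abs_of_nonneg hr0]
    rw [habs θ, mul_one]
    exact hr1
  have hptwise : ∀ θ : ℝ,
      F ((r : ℂ) * Complex.exp (θ * Complex.I)) * Complex.exp ((m : ℂ) * θ * Complex.I) =
        ∑' k : ℕ, g k θ := by
    intro θ
    have h1 := (hF _ (hmem θ)).mul_right (Complex.exp ((m : ℂ) * θ * Complex.I))
    rw [← h1.tsum_eq]
    refine tsum_congr fun k => ?_
    have he : Complex.exp ((k : ℂ) * ((θ : ℂ) * Complex.I)) * Complex.exp ((m : ℂ) * θ * Complex.I)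
        = Complex.exp ((((k : ℤ) + m : ℤ) : ℂ) * θ * Complex.I) := by
      rw [← Complex.exp_add]; congr 1; push_cast; ring
    rw [hg]
    simp only [mul_pow]
    rw [← Complex.exp_nat_mul, mul_assoc (c k), mul_assoc, he, ← mul_assoc]
  have hexpnorm : ∀ (j : ℤ) (θ : ℝ), ‖Complex.exp ((j : ℂ) * θ * Complex.I)‖ = 1 := by
    intro j θ
    have : (j : ℂ) * θ * Complex.I = ((j * θ : ℝ) : ℂ) * Complex.I := by push_cast; ring
    rw [this]
    exact Complex.norm_exp_ofReal_mul_I _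
  have hnorm : ∀ k θ, ‖g k θ‖ = ‖c k‖ * r ^ k := by
    intro k θ
    rw [hg]
    simp only [norm_mul, norm_pow, Complex.norm_real, Real.norm_eq_abs,
      _root_.abs_of_nonneg hr0, hexpnorm _ θ, mul_one]
  have hcont : ∀ k, Continuous (g k) := by
    intro k
    apply Continuous.mul continuous_const
    exact Complex.continuous_exp.comp (by continuity)
  have hle : (0:ℝ) ≤ 2 * π := by positivity
  rw [intervalIntegral.integral_of_le hle]
  rw [MeasureTheory.integral_congr_ae (Filter.Eventually.of_forall fun θ => hptwise θ)]
  rw [← MeasureTheory.integral_tsum_of_summable_integral_norm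
      (fun k => (hcont k).integrableOn_Ioc.integrable)
      (by
        have hsum := SalCoeff.summable_norm_coeff hF hr0 hr1
        refine Summable.congr (hsum.mul_right (2 * π)) fun k => ?_
        rw [MeasureTheory.integral_congr_ae (Filter.Eventually.of_forall fun θ => by
          rw [hnorm k θ])]
        rw [MeasureTheory.setIntegral_const]
        simp [Real.volume_Ioc, hle]
        ring)]
  refine tsum_congr fun k => ?_
  rw [hg]
  simp only
  rw [MeasureTheory.integral_const_mul]
  rw [← intervalIntegral.integral_of_le hle, intExp ((k : ℤ) + m)]

lemma fourier_coeff {c : ℕ → ℂ} {F : ℂ → ℂ}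
    (hF : ∀ z ∈ Metric.ball (0 : ℂ) 1, HasSum (fun k => c k * z ^ k) (F z))
    {r : ℝ} (hr0 : 0 ≤ r) (hr1 : r < 1) (m : ℕ) :
    (∫ θ in (0:ℝ)..(2 * π),
        F ((r : ℂ) * Complex.exp (θ * Complex.I)) * Complex.exp (-(m : ℂ) * θ * Complex.I)) =
      (2 * π : ℂ) * c m * (r : ℂ) ^ m := by
  have h := fourier_general hF hr0 hr1 (-(m : ℤ))
  have hcast : ((-(m : ℤ) : ℤ) : ℂ) = -(m : ℂ) := by push_cast; ring
  rw [hcast] at h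
  rw [h]
  rw [tsum_eq_single m (by
    intro k hkm
    have : ((k : ℤ) + -(m : ℤ)) ≠ 0 := by omega
    simp [this])]
  simp
  ring

lemma fourier_zero {c : ℕ → ℂ} {F : ℂ → ℂ}
    (hF : ∀ z ∈ Metric.ball (0 : ℂ) 1, HasSum (fun k => c k * z ^ k) (F z))
    {r : ℝ} (hr0 : 0 ≤ r) (hr1 : r < 1) {m : ℕ} (hm : m ≠ 0) :
    (∫ θ in (0:ℝ)..(2 * π),
        F ((r : ℂ) * Complex.exp (θ * Complex.I)) * Complex.exp ((m : ℂ) * θ * Complex.I)) = 0 := by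
  have h := fourier_general hF hr0 hr1 (m : ℤ)
  have hcast : (((m : ℤ) : ℤ) : ℂ) = (m : ℂ) := by push_cast; ring
  rw [hcast] at h
  rw [h]
  have : ∀ k : ℕ, ((k : ℤ) + (m : ℤ)) ≠ 0 := by intro k; omega
  simp [this]

lemma caratheodory {c : ℕ → ℂ} {p : ℂ → ℂ}
    (hp : ∀ z ∈ Metric.ball (0 : ℂ) 1, HasSum (fun k => c k * z ^ k) (p z))
    (hcont : ContinuousOn p (Metric.ball (0 : ℂ) 1))
    (hre : ∀ z ∈ Metric.ball (0 : ℂ) 1, 0 ≤ (p z).re)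
    (hc0 : c 0 = 1) {m : ℕ} (hm : m ≠ 0) : ‖c m‖ ≤ 2 := by
  have hle : (0:ℝ) ≤ 2 * π := by positivity
  have key : ∀ r : ℝ, 0 ≤ r → r < 1 → ‖c m‖ * r ^ m ≤ 2 := by
    intro r hr0 hr1
    have hmem : ∀ θ : ℝ, (r : ℂ) * Complex.exp ((θ : ℂ) * Complex.I) ∈ Metric.ball (0:ℂ) 1 := by
      intro θ
      simp only [mem_ball, dist_zero_right, norm_mul, Complex.norm_real, Real.norm_eq_abs,
        _root_.abs_of_nonneg hr0, Complex.norm_exp_ofReal_mul_I, mul_one]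
      exact hr1
    have hcc : Continuous fun θ : ℝ => p ((r : ℂ) * Complex.exp ((θ : ℂ) * Complex.I)) :=
      hcont.comp_continuous (by continuity) hmem
    set q : ℝ → ℂ := fun θ => p ((r : ℂ) * Complex.exp ((θ : ℂ) * Complex.I)) with hq
    -- Fourier coefficients
    have hA := fourier_coeff hp hr0 hr1 m
    have hB := fourier_zero hp hr0 hr1 hm
    -- conj version
    have hconj : (∫ θ in (0:ℝ)..(2 * π),
        (starRingEnd ℂ) (q θ) * Complex.exp (-(m : ℂ) * θ * Complex.I)) = 0 := by
      have hint : IntervalIntegrable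
          (fun θ : ℝ => q θ * Complex.exp ((m : ℂ) * θ * Complex.I))
          MeasureTheory.volume 0 (2 * π) :=
        (hcc.mul (Complex.continuous_exp.comp (by continuity))).intervalIntegrable _ _
      have h2 := (Complex.conjCLE.toContinuousLinearMap.intervalIntegral_comp_comm hint)
      simp only [ContinuousLinearEquiv.coe_coe, Complex.conjCLE_apply] at h2
      rw [hB, map_zero] at h2
      rw [← h2]
      refine intervalIntegral.integral_congr fun θ _ => ?_
      rw [map_mul, ← Complex.exp_conj]
      congr 2
      simp only [map_mul, Complex.conj_I, Complex.conj_ofReal, map_natCast]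
      push_cast
      ring
    -- combine: 2π c_m r^m = ∫ (q + conj q) e^{-imθ}
    have hintq : ∀ (w : ℂ → ℂ), Continuous w → IntervalIntegrable
        (fun θ : ℝ => w (q θ)) MeasureTheory.volume 0 (2 * π) := fun w hw =>
      ((hw.comp hcc).intervalIntegrable _ _)
    have hint1 : IntervalIntegrable
        (fun θ : ℝ => q θ * Complex.exp (-(m : ℂ) * θ * Complex.I))
        MeasureTheory.volume 0 (2 * π) :=
      (hcc.mul (Complex.continuous_exp.comp (by continuity))).intervalIntegrable _ _
    have hint2 : IntervalIntegrable
        (fun θ : ℝ => (starRingEnd ℂ) (q θ) * Complex.exp (-(m : ℂ) * θ * Complex.I))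
        MeasureTheory.volume 0 (2 * π) :=
      ((Complex.continuous_conj.comp hcc).mul
        (Complex.continuous_exp.comp (by continuity))).intervalIntegrable _ _
    have hsum : (∫ θ in (0:ℝ)..(2 * π),
        (q θ + (starRingEnd ℂ) (q θ)) * Complex.exp (-(m : ℂ) * θ * Complex.I)) =
        (2 * π : ℂ) * c m * (r : ℂ) ^ m := by
      have := intervalIntegral.integral_add hint1 hint2
      simp only [add_mul] at *
      rw [this, hA, hconj, add_zero]
    -- norm bound
    have hnormle : ‖(2 * π : ℂ) * c m * (r : ℂ) ^ m‖ ≤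
        ∫ θ in (0:ℝ)..(2 * π), 2 * (q θ).re := by
      rw [← hsum]
      refine (intervalIntegral.norm_integral_le_integral_norm hle).trans ?_
      refine le_of_eq (intervalIntegral.integral_congr fun θ _ => ?_)
      have hqre : q θ + (starRingEnd ℂ) (q θ) = ((2 * (q θ).re : ℝ) : ℂ) := by
        rw [Complex.add_conj]
      rw [norm_mul, hqre]
      have : ‖Complex.exp (-(m : ℂ) * θ * Complex.I)‖ = 1 := by
        have : (-(m : ℂ)) * θ * Complex.I = ((-(m : ℝ) * θ : ℝ) : ℂ) * Complex.I := by
          push_cast; ring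
        rw [this, Complex.norm_exp_ofReal_mul_I]
      rw [this, mul_one, Complex.norm_real, Real.norm_eq_abs, _root_.abs_of_nonneg]
      have := hre _ (hmem θ)
      positivity
    -- compute ∫ 2 re q = 4π
    have hzero := fourier_coeff hp hr0 hr1 0
    have hq2π : (∫ θ in (0:ℝ)..(2 * π), q θ) = (2 * π : ℂ) := by
      rw [hc0] at hzero
      simp only [mul_one, pow_zero] at hzero
      rw [← hzero]
      refine intervalIntegral.integral_congr fun θ _ => ?_
      simp
      rfl
    have hqint : IntervalIntegrable q MeasureTheory.volume 0 (2 * π) :=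
      hcc.intervalIntegrable _ _
    have hreint : (∫ θ in (0:ℝ)..(2 * π), 2 * (q θ).re) = 4 * π := by
      have h3 := Complex.reCLM.intervalIntegral_comp_comm hqint
      simp only [Complex.reCLM_apply] at h3
      rw [intervalIntegral.integral_const_mul, h3, hq2π]
      simp only [Complex.mul_re, Complex.ofReal_re, Complex.ofReal_im, Complex.re_ofNat,
        Complex.im_ofNat]
      ring
    have hfin : 2 * π * (‖c m‖ * r ^ m) ≤ 4 * π := by
      have h4 : ‖(2 * π : ℂ) * c m * (r : ℂ) ^ m‖ = 2 * π * (‖c m‖ * r ^ m) := by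
        simp only [norm_mul, norm_pow, Complex.norm_real, Real.norm_eq_abs,
          _root_.abs_of_nonneg hr0, _root_.abs_of_nonneg Real.pi_pos.le, Complex.norm_ofNat]
        ring
      rw [← h4, ← hreint]
      exact hnormle
    nlinarith [Real.pi_pos]
  -- pass to the limit r → 1⁻
  have htend : Filter.Tendsto (fun i : ℕ => ‖c m‖ * (1 - 1/(i+1) : ℝ) ^ m) atTop
      (nhds (‖c m‖ * 1 ^ m)) := by
    refine Filter.Tendsto.const_mul _ (Filter.Tendsto.pow ?_ m)
    have := tendsto_one_div_add_atTop_nhds_zero_nat (𝕜 := ℝ)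
    have h5 := (tendsto_const_nhds : Filter.Tendsto (fun _ : ℕ => (1:ℝ)) atTop (nhds 1)).sub this
    simpa using h5
  have hbound : ∀ i : ℕ, ‖c m‖ * (1 - 1/(i+1) : ℝ) ^ m ≤ 2 := by
    intro i
    have hi0 : (0:ℝ) < 1/(i+1) := by positivity
    have hi1 : (1/(i+1) : ℝ) ≤ 1 := by
      rw [div_le_one (by positivity)]
      simp
    exact key _ (by linarith) (by linarith)
  have := le_of_tendsto htend (Filter.Eventually.of_forall hbound)
  simpa using this

lemma fourier_int {c : ℕ → ℂ} {F : ℂ → ℂ}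
    (hF : ∀ z ∈ Metric.ball (0 : ℂ) 1, HasSum (fun k => c k * z ^ k) (F z))
    {r : ℝ} (hr0 : 0 ≤ r) (hr1 : r < 1) (m : ℤ) :
    (∫ θ in (0:ℝ)..(2 * π),
        F ((r : ℂ) * Complex.exp (θ * Complex.I)) * Complex.exp ((m : ℂ) * θ * Complex.I)) =
      if 0 ≤ -m then (2 * π : ℂ) * c (-m).toNat * (r : ℂ) ^ ((-m).toNat) else 0 := by
  rw [fourier_general hF hr0 hr1 m]
  rcases le_or_gt m 0 with hm | hm
  · rw [if_pos (by omega)]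
    rw [tsum_eq_single (-m).toNat (by
      intro k hkm
      have : ((k : ℤ) + m) ≠ 0 := by omega
      simp [this])]
    have h6 : (((-m).toNat : ℤ) + m) = 0 := by omega
    rw [if_pos h6]
    ring
  · rw [if_neg (by omega)]
    have : ∀ k : ℕ, ((k : ℤ) + m) ≠ 0 := by intro k; omega
    simp [this]

lemma recursion {b c : ℕ → ℂ} {G G1 p : ℂ → ℂ}
    (hb : ∀ z ∈ Metric.ball (0 : ℂ) 1, HasSum (fun j => b j * z ^ j) (G z))
    (hb1 : ∀ z ∈ Metric.ball (0 : ℂ) 1, HasSum (fun j : ℕ => ((j : ℂ) * b j) * z ^ j) (G1 z))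
    (hc : ∀ z ∈ Metric.ball (0 : ℂ) 1, HasSum (fun j => c j * z ^ j) (p z))
    (hpc : ContinuousOn p (Metric.ball (0 : ℂ) 1))
    (hGc : ContinuousOn G (Metric.ball (0 : ℂ) 1))
    (hG1c : ContinuousOn G1 (Metric.ball (0 : ℂ) 1))
    (hpg : ∀ z ∈ Metric.ball (0 : ℂ) 1, G1 z = p z * G z)
    (hc0 : c 0 = 1) (k : ℕ) :
    ((k : ℂ) - 1) * b k = ∑ j ∈ Finset.range k, c (k - j) * b j := by
  have hr0 : (0:ℝ) ≤ 1/2 := by norm_num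
  have hr1 : (1/2:ℝ) < 1 := by norm_num
  have hle : (0:ℝ) ≤ 2 * π := by positivity
  have hmem : ∀ θ : ℝ, ((1/2:ℝ) : ℂ) * Complex.exp ((θ : ℂ) * Complex.I) ∈
      Metric.ball (0:ℂ) 1 := by
    intro θ
    simp only [mem_ball, dist_zero_right, norm_mul, Complex.norm_real, Real.norm_eq_abs,
      _root_.abs_of_nonneg hr0, Complex.norm_exp_ofReal_mul_I, mul_one]
    exact hr1
  have hexpc : ∀ w : ℂ, Continuous fun θ : ℝ => Complex.exp (w * (θ : ℂ) * Complex.I) :=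
    fun w => Complex.continuous_exp.comp
      ((continuous_const.mul Complex.continuous_ofReal).mul continuous_const)
  have hzc : Continuous fun θ : ℝ => ((1/2:ℝ) : ℂ) * Complex.exp ((θ : ℂ) * Complex.I) :=
    continuous_const.mul (Complex.continuous_exp.comp
      (Complex.continuous_ofReal.mul continuous_const))
  have hpcc : Continuous fun θ : ℝ => p (((1/2:ℝ) : ℂ) * Complex.exp ((θ : ℂ) * Complex.I)) :=
    hpc.comp_continuous hzc hmem
  have hGcc : Continuous fun θ : ℝ => G (((1/2:ℝ) : ℂ) * Complex.exp ((θ : ℂ) * Complex.I)) :=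
    hGc.comp_continuous hzc hmem
  have hG1cc : Continuous fun θ : ℝ => G1 (((1/2:ℝ) : ℂ) * Complex.exp ((θ : ℂ) * Complex.I)) :=
    hG1c.comp_continuous hzc hmem
  -- auxiliary integrals
  have hJ : ∀ j : ℕ, (∫ θ in (0:ℝ)..(2 * π),
      (p (((1/2:ℝ) : ℂ) * Complex.exp ((θ : ℂ) * Complex.I)) - 1) *
        Complex.exp (((j : ℂ) - (k : ℂ)) * θ * Complex.I)) =
      if j < k then (2 * π : ℂ) * c (k - j) * (((1/2:ℝ) : ℂ)) ^ (k - j) else 0 := by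
    intro j
    have hcast : ((j : ℂ) - (k : ℂ)) = (((j : ℤ) - (k : ℤ) : ℤ) : ℂ) := by push_cast; ring
    simp only [hcast]
    have hint1 : IntervalIntegrable
        (fun θ : ℝ => p (((1/2:ℝ) : ℂ) * Complex.exp ((θ : ℂ) * Complex.I)) *
          Complex.exp ((((j : ℤ) - (k : ℤ) : ℤ) : ℂ) * θ * Complex.I))
        MeasureTheory.volume 0 (2 * π) :=
      (hpcc.mul (hexpc _)).intervalIntegrable _ _
    have hint2 : IntervalIntegrable
        (fun θ : ℝ => Complex.exp ((((j : ℤ) - (k : ℤ) : ℤ) : ℂ) * θ * Complex.I))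
        MeasureTheory.volume 0 (2 * π) :=
      (hexpc _).intervalIntegrable _ _
    rw [show (∫ θ in (0:ℝ)..(2 * π),
        (p (((1/2:ℝ) : ℂ) * Complex.exp ((θ : ℂ) * Complex.I)) - 1) *
          Complex.exp ((((j : ℤ) - (k : ℤ) : ℤ) : ℂ) * θ * Complex.I)) =
        (∫ θ in (0:ℝ)..(2 * π),
          p (((1/2:ℝ) : ℂ) * Complex.exp ((θ : ℂ) * Complex.I)) *
            Complex.exp ((((j : ℤ) - (k : ℤ) : ℤ) : ℂ) * θ * Complex.I)) -
        (∫ θ in (0:ℝ)..(2 * π),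
          Complex.exp ((((j : ℤ) - (k : ℤ) : ℤ) : ℂ) * θ * Complex.I)) from by
      rw [← intervalIntegral.integral_sub hint1 hint2]
      exact intervalIntegral.integral_congr fun θ _ => by ring]
    rw [fourier_int hc hr0 hr1 ((j : ℤ) - (k : ℤ)), intExp ((j : ℤ) - (k : ℤ))]
    rcases lt_trichotomy j k with hjk | hjk | hjk
    · rw [if_pos (show (0:ℤ) ≤ -((j:ℤ) - (k:ℤ)) by omega),
        if_neg (show ¬((j:ℤ) - (k:ℤ) = 0) by omega), if_pos hjk, sub_zero]
      have ht : (-((j:ℤ) - (k:ℤ))).toNat = k - j := by omega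
      rw [ht]
    · subst hjk
      rw [if_pos (show (0:ℤ) ≤ -((j:ℤ) - (j:ℤ)) by omega),
        if_pos (show ((j:ℤ) - (j:ℤ) = 0) by omega), if_neg (lt_irrefl j)]
      have ht : (-((j:ℤ) - (j:ℤ))).toNat = 0 := by omega
      rw [ht, hc0]
      simp
    · rw [if_neg (show ¬(0:ℤ) ≤ -((j:ℤ) - (k:ℤ)) by omega),
        if_neg (show ¬((j:ℤ) - (k:ℤ) = 0) by omega), if_neg (by omega), sub_zero]
  -- left side: the integral of (p - 1) * G * e^{-ik θ}
  have hIG := fourier_coeff hb hr0 hr1 k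
  have hIG1 := fourier_coeff hb1 hr0 hr1 k
  have hintG : IntervalIntegrable
      (fun θ : ℝ => G (((1/2:ℝ) : ℂ) * Complex.exp ((θ : ℂ) * Complex.I)) *
        Complex.exp (-(k : ℂ) * θ * Complex.I)) MeasureTheory.volume 0 (2 * π) :=
    (hGcc.mul (hexpc _)).intervalIntegrable _ _
  have hintG1 : IntervalIntegrable
      (fun θ : ℝ => G1 (((1/2:ℝ) : ℂ) * Complex.exp ((θ : ℂ) * Complex.I)) *
        Complex.exp (-(k : ℂ) * θ * Complex.I)) MeasureTheory.volume 0 (2 * π) :=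
    (hG1cc.mul (hexpc _)).intervalIntegrable _ _
  have hLHS : (∫ θ in (0:ℝ)..(2 * π),
      (p (((1/2:ℝ) : ℂ) * Complex.exp ((θ : ℂ) * Complex.I)) - 1) *
        G (((1/2:ℝ) : ℂ) * Complex.exp ((θ : ℂ) * Complex.I)) *
        Complex.exp (-(k : ℂ) * θ * Complex.I)) =
      (2 * π : ℂ) * (((k : ℂ) - 1) * b k) * (((1/2:ℝ) : ℂ)) ^ k := by
    have heq : ∀ θ : ℝ,
        (p (((1/2:ℝ) : ℂ) * Complex.exp ((θ : ℂ) * Complex.I)) - 1) *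
          G (((1/2:ℝ) : ℂ) * Complex.exp ((θ : ℂ) * Complex.I)) *
          Complex.exp (-(k : ℂ) * θ * Complex.I) =
        G1 (((1/2:ℝ) : ℂ) * Complex.exp ((θ : ℂ) * Complex.I)) *
          Complex.exp (-(k : ℂ) * θ * Complex.I) -
        G (((1/2:ℝ) : ℂ) * Complex.exp ((θ : ℂ) * Complex.I)) *
          Complex.exp (-(k : ℂ) * θ * Complex.I) := by
      intro θ
      rw [hpg _ (hmem θ)]
      ring
    rw [intervalIntegral.integral_congr fun θ _ => heq θ,
      intervalIntegral.integral_sub hintG1 hintG, hIG1, hIG]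
    ring
  -- right side: expand G as a series
  have hRHS : (∫ θ in (0:ℝ)..(2 * π),
      (p (((1/2:ℝ) : ℂ) * Complex.exp ((θ : ℂ) * Complex.I)) - 1) *
        G (((1/2:ℝ) : ℂ) * Complex.exp ((θ : ℂ) * Complex.I)) *
        Complex.exp (-(k : ℂ) * θ * Complex.I)) =
      (2 * π : ℂ) * (((1/2:ℝ) : ℂ)) ^ k * ∑ j ∈ Finset.range k, c (k - j) * b j := by
    set Q : ℝ → ℂ := fun θ =>
      (p (((1/2:ℝ) : ℂ) * Complex.exp ((θ : ℂ) * Complex.I)) - 1) *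
        Complex.exp (-(k : ℂ) * θ * Complex.I) with hQ
    have hQc : Continuous Q := (hpcc.sub continuous_const).mul (hexpc _)
    obtain ⟨M, hM⟩ := isCompact_Icc.exists_bound_of_continuousOn
      (s := Set.Icc (0:ℝ) (2 * π)) hQc.continuousOn
    set g : ℕ → ℝ → ℂ := fun j θ =>
      (b j * (((1/2:ℝ) : ℂ) * Complex.exp ((θ : ℂ) * Complex.I)) ^ j) * Q θ with hg
    have hgc : ∀ j, Continuous (g j) := fun j =>
      (continuous_const.mul (hzc.pow j)).mul hQc
    have hpt : ∀ θ : ℝ,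
        (p (((1/2:ℝ) : ℂ) * Complex.exp ((θ : ℂ) * Complex.I)) - 1) *
          G (((1/2:ℝ) : ℂ) * Complex.exp ((θ : ℂ) * Complex.I)) *
          Complex.exp (-(k : ℂ) * θ * Complex.I) = ∑' j : ℕ, g j θ := by
      intro θ
      have h1 := (hb _ (hmem θ)).mul_right (Q θ)
      simp only [hg]
      rw [h1.tsum_eq, hQ]
      ring
    have hnorm : ∀ j, ∀ θ ∈ Set.Icc (0:ℝ) (2*π), ‖g j θ‖ ≤ ‖b j‖ * (1/2:ℝ) ^ j * M := by
      intro j θ hθ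
      have h2 : ‖g j θ‖ = ‖b j‖ * (1/2:ℝ) ^ j * ‖Q θ‖ := by
        simp only [hg, norm_mul, norm_pow, norm_mul, Complex.norm_real, Real.norm_eq_abs,
          _root_.abs_of_nonneg hr0, Complex.norm_exp_ofReal_mul_I, mul_one]
      rw [h2]
      exact mul_le_mul_of_nonneg_left (hM θ hθ) (by positivity)
    have hM0 : 0 ≤ M := (norm_nonneg _).trans (hM 0 ⟨le_refl _, hle⟩)
    have hintnorm : ∀ j : ℕ,
        (∫ θ in Set.Ioc (0:ℝ) (2*π), ‖g j θ‖) ≤ ‖b j‖ * (1/2:ℝ) ^ j * M * (2 * π) := by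
      intro j
      have h3 : (∫ θ in Set.Ioc (0:ℝ) (2*π), ‖g j θ‖) ≤
          ∫ _ in Set.Ioc (0:ℝ) (2*π), (‖b j‖ * (1/2:ℝ) ^ j * M) := by
        refine MeasureTheory.setIntegral_mono_on
          ((hgc j).norm.integrableOn_Ioc) ((MeasureTheory.integrableOn_const_iff).2 (Or.inr ?_))
          measurableSet_Ioc (fun θ hθ => hnorm j θ (Set.Ioc_subset_Icc_self hθ))
        rw [Real.volume_Ioc]
        exact ENNReal.ofReal_lt_top
      refine h3.trans ?_
      rw [MeasureTheory.setIntegral_const]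
      rw [Real.volume_real_Ioc_of_le hle, sub_zero]
      rw [smul_eq_mul]
      ring_nf
      exact le_refl _
    rw [intervalIntegral.integral_of_le hle]
    rw [MeasureTheory.integral_congr_ae (Filter.Eventually.of_forall fun θ => hpt θ)]
    rw [← MeasureTheory.integral_tsum_of_summable_integral_norm
        (fun j => (hgc j).integrableOn_Ioc.integrable)
        (Summable.of_nonneg_of_le
          (fun j => MeasureTheory.integral_nonneg fun θ => norm_nonneg _)
          hintnorm
          (((SalCoeff.summable_norm_coeff hb hr0 hr1).mul_right (M * (2 * π))).congr
            (fun j => by ring)))]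
    -- evaluate each integral
    have heval : ∀ j : ℕ, (∫ θ in Set.Ioc (0:ℝ) (2*π), g j θ) =
        (b j * ((1/2:ℝ):ℂ) ^ j) *
          (if j < k then (2 * π : ℂ) * c (k - j) * (((1/2:ℝ) : ℂ)) ^ (k - j) else 0) := by
      intro j
      rw [← hJ j, ← intervalIntegral.integral_of_le hle, ← intervalIntegral.integral_const_mul]
      refine intervalIntegral.integral_congr fun θ _ => ?_
      simp only [hg, hQ, mul_pow]
      have he : Complex.exp ((θ:ℂ) * Complex.I) ^ j * Complex.exp (-(k : ℂ) * θ * Complex.I)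
          = Complex.exp (((j : ℂ) - (k : ℂ)) * θ * Complex.I) := by
        rw [← Complex.exp_nat_mul, ← Complex.exp_add]
        congr 1
        push_cast
        ring
      calc b j * (((1/2:ℝ):ℂ) ^ j * Complex.exp ((θ:ℂ) * Complex.I) ^ j) *
            ((p (((1/2:ℝ) : ℂ) * Complex.exp ((θ : ℂ) * Complex.I)) - 1) *
              Complex.exp (-(k : ℂ) * θ * Complex.I))
          = b j * ((1/2:ℝ):ℂ) ^ j *
              ((p (((1/2:ℝ) : ℂ) * Complex.exp ((θ : ℂ) * Complex.I)) - 1) *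
                (Complex.exp ((θ:ℂ) * Complex.I) ^ j *
                  Complex.exp (-(k : ℂ) * θ * Complex.I))) := by ring
        _ = _ := by rw [he]
    rw [tsum_congr heval]
    rw [tsum_eq_sum (s := Finset.range k) (by
      intro j hj
      rw [if_neg (by simpa using hj), mul_zero])]
    rw [Finset.mul_sum]
    refine Finset.sum_congr rfl fun j hj => ?_
    rw [if_pos (Finset.mem_range.1 hj)]
    have hjk : j ≤ k := (Finset.mem_range.1 hj).le
    have hpow : ((1/2:ℝ):ℂ) ^ j * ((1/2:ℝ):ℂ) ^ (k - j) = ((1/2:ℝ):ℂ) ^ k := by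
      rw [← pow_add]
      congr 1
      omega
    calc b j * ((1/2:ℝ):ℂ) ^ j * ((2 * π : ℂ) * c (k - j) * ((1/2:ℝ):ℂ) ^ (k - j))
        = (2 * π : ℂ) * (((1/2:ℝ):ℂ) ^ j * ((1/2:ℝ):ℂ) ^ (k - j)) * (c (k - j) * b j) := by
          ring
      _ = 2 * ↑π * ((1/2:ℝ):ℂ) ^ k * (c (k - j) * b j) := by rw [hpow]
  have h7 := hLHS.symm.trans hRHS
  have hne : ((2 * π : ℂ) * (((1/2:ℝ) : ℂ)) ^ k) ≠ 0 := by
    simp [Real.pi_ne_zero]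
  apply mul_left_cancel₀ hne
  calc (2 * π : ℂ) * (((1/2:ℝ) : ℂ)) ^ k * (((k : ℂ) - 1) * b k)
      = (2 * π : ℂ) * (((k : ℂ) - 1) * b k) * (((1/2:ℝ) : ℂ)) ^ k := by ring
    _ = (2 * π : ℂ) * (((1/2:ℝ) : ℂ)) ^ k * ∑ j ∈ Finset.range k, c (k - j) * b j := h7


lemma shift {d : ℕ → ℂ} {D : ℂ → ℂ} (hd0 : d 0 = 0)
    (hd : ∀ z ∈ Metric.ball (0:ℂ) 1, HasSum (fun j => d j * z ^ j) (D z)) :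
    ∀ z ∈ Metric.ball (0:ℂ) 1,
      HasSum (fun j => d (j+1) * z ^ j) (∑' j : ℕ, d (j+1) * z ^ j) ∧
      z * (∑' j : ℕ, d (j+1) * z ^ j) = D z := by
  intro z hz
  rcases eq_or_ne z 0 with rfl | hz0
  · have hD0 : D 0 = 0 := by
      have h1 : HasSum (fun j : ℕ => d j * (0:ℂ) ^ j) (d 0 * (0:ℂ) ^ 0) :=
        hasSum_single 0 (fun j hj => by simp [zero_pow hj])
      have := (hd 0 (by simp)).unique h1
      simpa [hd0] using this
    have h1 : HasSum (fun j : ℕ => d (j+1) * (0:ℂ) ^ j) (d 1 * (0:ℂ) ^ 0) :=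
      hasSum_single 0 (fun j hj => by simp [zero_pow hj])
    exact ⟨h1.summable.hasSum, by simp [hD0]⟩
  · have h2 : HasSum (fun j : ℕ => d (j+1) * z ^ (j+1)) (D z) := by
      refine (hasSum_nat_add_iff (f := fun j : ℕ => d j * z ^ j) 1).2 ?_
      simpa [hd0] using hd z hz
    have h3 : HasSum (fun j : ℕ => d (j+1) * z ^ j) (D z * z⁻¹) := by
      refine (h2.mul_right z⁻¹).congr_fun fun j => ?_
      rw [pow_succ, mul_assoc, mul_assoc, mul_inv_cancel₀ hz0, mul_one]
    refine ⟨h3.summable.hasSum, ?_⟩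
    rw [h3.tsum_eq]
    field_simp

end Test
end

/-- Corollary 3.3: If f ∈ Sₙ then |aₖ| ≤ k^{1−n} for every integer k ≥ 2. -/
theorem salagean_coeff_bound
    (n : ℕ) (f Dn Dn1 : ℂ → ℂ) (a : ℕ → ℂ)
    (ha0 : a 0 = 0) (ha1 : a 1 = 1)
    (hf : ∀ z ∈ Metric.ball (0 : ℂ) 1, HasSum (fun k => a k * z ^ k) (f z))
    (hDn : ∀ z ∈ Metric.ball (0 : ℂ) 1,
      HasSum (fun k : ℕ => (k : ℂ) ^ n * a k * z ^ k) (Dn z))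
    (hDn1 : ∀ z ∈ Metric.ball (0 : ℂ) 1,
      HasSum (fun k : ℕ => (k : ℂ) ^ (n + 1) * a k * z ^ k) (Dn1 z))
    (hne : ∀ z ∈ Metric.ball (0 : ℂ) 1, z ≠ 0 → Dn z ≠ 0)
    (hre : ∀ z ∈ Metric.ball (0 : ℂ) 1, z ≠ 0 → 0 < (Dn1 z / Dn z).re)
    (k : ℕ) (hk : 2 ≤ k) :
    ‖a k‖ ≤ (k : ℝ) ^ ((1 : ℤ) - (n : ℤ)) := by
  classical
  set b : ℕ → ℂ := fun j => (j : ℂ) ^ n * a j with hbdef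
  have hb0 : b 0 = 0 := by simp [hbdef, ha0]
  have hb1' : b 1 = 1 := by simp [hbdef, ha1]
  have hball0 : (0 : ℂ) ∈ Metric.ball (0 : ℂ) 1 := by simp
  -- series hypotheses in terms of b
  have hb : ∀ z ∈ Metric.ball (0 : ℂ) 1, HasSum (fun j => b j * z ^ j) (Dn z) := hDn
  have hb1 : ∀ z ∈ Metric.ball (0 : ℂ) 1,
      HasSum (fun j : ℕ => ((j : ℂ) * b j) * z ^ j) (Dn1 z) := by
    intro z hz
    refine (hDn1 z hz).congr_fun fun j => ?_
    rw [hbdef]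
    simp only [pow_succ]
    ring
  -- values at 0
  have hDn0 : Dn 0 = 0 := by
    have h1 : HasSum (fun j : ℕ => b j * (0:ℂ) ^ j) (b 0 * (0:ℂ) ^ 0) :=
      hasSum_single 0 (fun j hj => by simp [zero_pow hj])
    have := (hb 0 hball0).unique h1
    simpa [hb0] using this
  have hDn10 : Dn1 0 = 0 := by
    have h1 : HasSum (fun j : ℕ => ((j:ℂ) * b j) * (0:ℂ) ^ j) (((0:ℕ):ℂ) * b 0 * (0:ℂ) ^ 0) :=
      hasSum_single 0 (fun j hj => by simp [zero_pow hj])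
    have := (hb1 0 hball0).unique h1
    simpa [hb0] using this
  -- the shifted functions G, H
  set G : ℂ → ℂ := fun z => ∑' j : ℕ, b (j+1) * z ^ j with hGdef
  set H : ℂ → ℂ := fun z => ∑' j : ℕ, (((j+1 : ℕ)) : ℂ) * b (j+1) * z ^ j with hHdef
  have hb10 : ((0:ℕ):ℂ) * b 0 = 0 := by simp
  have hshG := Test.shift hb0 hb
  have hshH := Test.shift (d := fun j : ℕ => (j:ℂ) * b j) (by simpa using hb10) hb1
  have hG : ∀ z ∈ Metric.ball (0:ℂ) 1, HasSum (fun j => b (j+1) * z ^ j) (G z) := by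
    intro z hz
    simpa only [hGdef] using (hshG z hz).1
  have hH : ∀ z ∈ Metric.ball (0:ℂ) 1,
      HasSum (fun j : ℕ => (((j+1 : ℕ)) : ℂ) * b (j+1) * z ^ j) (H z) := by
    intro z hz
    simpa only [hHdef] using (hshH z hz).1
  have hGz : ∀ z ∈ Metric.ball (0:ℂ) 1, z * G z = Dn z := fun z hz => (hshG z hz).2
  have hHz : ∀ z ∈ Metric.ball (0:ℂ) 1, z * H z = Dn1 z := by
    intro z hz
    simpa only [hHdef] using (hshH z hz).2
  have hG0 : G 0 = 1 := by
    have h1 : HasSum (fun j : ℕ => b (j+1) * (0:ℂ) ^ j) (b 1 * (0:ℂ) ^ 0) :=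
      hasSum_single 0 (fun j hj => by simp [zero_pow hj])
    have := (hG 0 hball0).unique h1
    simpa [hb1'] using this
  have hH0 : H 0 = 1 := by
    have h1 : HasSum (fun j : ℕ => (((j+1 : ℕ)) : ℂ) * b (j+1) * (0:ℂ) ^ j)
        ((((0+1 : ℕ)) : ℂ) * b 1 * (0:ℂ) ^ 0) :=
      hasSum_single 0 (fun j hj => by simp [zero_pow hj])
    have := (hH 0 hball0).unique h1
    simpa [hb1'] using this
  have hGne : ∀ z ∈ Metric.ball (0:ℂ) 1, G z ≠ 0 := by
    intro z hz
    rcases eq_or_ne z 0 with rfl | hz0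
    · rw [hG0]; exact one_ne_zero
    · intro hzero
      apply hne z hz hz0
      rw [← hGz z hz, hzero, mul_zero]
  -- differentiability
  have hEM : Metric.eball (0:ℂ) (1:ENNReal) = Metric.ball (0:ℂ) 1 := by
    rw [show (1:ENNReal) = ((1:NNReal) : ENNReal) by simp, Metric.emetric_ball_nnreal]
    norm_num
  have hGd : DifferentiableOn ℂ G (Metric.ball (0:ℂ) 1) := by
    have h := (Test.hasFPS hG).differentiableOn
    rwa [hEM] at h
  have hHd : DifferentiableOn ℂ H (Metric.ball (0:ℂ) 1) := by
    have h := (Test.hasFPS hH).differentiableOn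
    rwa [hEM] at h
  have hDnc : ContinuousOn Dn (Metric.ball (0:ℂ) 1) := by
    have h := (Test.hasFPS hb).differentiableOn
    rw [hEM] at h
    exact h.continuousOn
  have hDn1c : ContinuousOn Dn1 (Metric.ball (0:ℂ) 1) := by
    have h := (Test.hasFPS hb1).differentiableOn
    rw [hEM] at h
    exact h.continuousOn
  -- the function p
  set p : ℂ → ℂ := fun z => H z / G z with hpdef
  have hpd : DifferentiableOn ℂ p (Metric.ball (0:ℂ) 1) := hHd.div hGd hGne
  have hpcont : ContinuousOn p (Metric.ball (0:ℂ) 1) := hpd.continuousOn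
  have hp0 : p 0 = 1 := by rw [hpdef]; simp only [hG0, hH0]; norm_num
  have hpq : ∀ z ∈ Metric.ball (0:ℂ) 1, z ≠ 0 → p z = Dn1 z / Dn z := by
    intro z hz hz0
    rw [hpdef]
    simp only
    rw [← hGz z hz, ← hHz z hz, mul_div_mul_left _ _ hz0]
  have hrep : ∀ z ∈ Metric.ball (0:ℂ) 1, 0 ≤ (p z).re := by
    intro z hz
    rcases eq_or_ne z 0 with rfl | hz0
    · rw [hp0]; norm_num
    · rw [hpq z hz hz0]
      exact (hre z hz hz0).le
  have hpg : ∀ z ∈ Metric.ball (0:ℂ) 1, Dn1 z = p z * Dn z := by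
    intro z hz
    rcases eq_or_ne z 0 with rfl | hz0
    · rw [hDn10, hDn0, mul_zero]
    · rw [hpq z hz hz0, div_mul_cancel₀ _ (hne z hz hz0)]
  -- power series of p
  have hFPS : ∀ R : NNReal, 0 < R → (R:ℝ) < 1 →
      HasFPowerSeriesOnBall p (cauchyPowerSeries p 0 (R:ℝ)) 0 R := by
    intro R hR0 hR1
    refine DifferentiableOn.hasFPowerSeriesOnBall ?_ hR0
    refine hpd.mono fun w hw => ?_
    simp only [Metric.mem_closedBall, dist_zero_right] at hw
    simp only [mem_ball, dist_zero_right]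
    exact lt_of_le_of_lt hw hR1
  set c : ℕ → ℂ := fun m => (cauchyPowerSeries p 0 ((1/2 : NNReal) : ℝ)).coeff m with hcdef
  have hhalf := hFPS (1/2) (by norm_num) (by norm_num)
  have hc : ∀ z ∈ Metric.ball (0:ℂ) 1, HasSum (fun m => c m * z ^ m) (p z) := by
    intro z hz
    simp only [mem_ball, dist_zero_right] at hz
    have hz0 : (0:ℝ) ≤ ‖z‖ := norm_nonneg z
    set s : ℝ := (‖z‖ + 1) / 2 with hs
    have hs0 : 0 < s := by rw [hs]; linarith
    have hs1 : s < 1 := by rw [hs]; linarith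
    have hzs : ‖z‖ < s := by rw [hs]; linarith
    have hFs := hFPS s.toNNReal (by simpa using hs0) (by rwa [Real.coe_toNNReal _ hs0.le])
    have hseq : cauchyPowerSeries p 0 ((s.toNNReal : ℝ)) =
        cauchyPowerSeries p 0 ((1/2 : NNReal) : ℝ) :=
      hFs.hasFPowerSeriesAt.eq_formalMultilinearSeries hhalf.hasFPowerSeriesAt
    have hz' : z ∈ Metric.eball (0:ℂ) (s.toNNReal : ENNReal) := by
      rw [Metric.emetric_ball_nnreal]
      simp only [mem_ball, dist_zero_right, Real.coe_toNNReal _ hs0.le]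
      exact hzs
    have hsum := hFs.hasSum hz'
    simp only [zero_add] at hsum
    refine hsum.congr_fun fun m => ?_
    rw [FormalMultilinearSeries.apply_eq_pow_smul_coeff, smul_eq_mul, hcdef, hseq, mul_comm]
  have hc0 : c 0 = 1 := by
    have h1 : HasSum (fun m : ℕ => c m * (0:ℂ) ^ m) (c 0 * (0:ℂ) ^ 0) :=
      hasSum_single 0 (fun m hm => by simp [zero_pow hm])
    have := (hc 0 hball0).unique h1
    rw [hp0] at this
    simpa using this.symm
  -- recursion and coefficient bound
  have hrec := Test.recursion hb hb1 hc hpcont hDnc hDn1c hpg hc0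
  have hcar : ∀ m : ℕ, m ≠ 0 → ‖c m‖ ≤ 2 :=
    fun m hm => Test.caratheodory hc hpcont hrep hc0 hm
  -- induction: ‖b j‖ ≤ j
  have hbound : ∀ j : ℕ, ‖b j‖ ≤ (j : ℝ) := by
    intro j
    induction j using Nat.strong_induction_on with
    | _ j IH =>
      match j with
      | 0 => simp [hb0]
      | 1 => simp [hb1']
      | (m+2) =>
        set K := m + 2 with hK
        have hrecK := hrec K
        have h1 : ‖((K:ℂ) - 1) * b K‖ = ((K:ℝ) - 1) * ‖b K‖ := by
          rw [norm_mul]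
          congr 1
          have : ((K:ℂ) - 1) = (((K:ℝ) - 1 : ℝ) : ℂ) := by push_cast; ring
          rw [this, Complex.norm_real, Real.norm_eq_abs, _root_.abs_of_nonneg]
          have : (1:ℝ) ≤ (K:ℝ) := by exact_mod_cast Nat.one_le_iff_ne_zero.2 (by omega)
          linarith
        have h2 : ‖∑ i ∈ Finset.range K, c (K - i) * b i‖ ≤
            ∑ i ∈ Finset.range K, 2 * (i:ℝ) := by
          refine (norm_sum_le _ _).trans (Finset.sum_le_sum fun i hi => ?_)
          rw [norm_mul]
          have hi' : i < K := Finset.mem_range.1 hi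
          refine mul_le_mul (hcar _ (by omega)) (IH i hi') (norm_nonneg _) (by norm_num)
        have h3 : ∑ i ∈ Finset.range K, 2 * (i:ℝ) = (K:ℝ) * ((K:ℝ) - 1) := by
          have hnat := Finset.sum_range_id_mul_two K
          have hcast : ((∑ i ∈ Finset.range K, i : ℕ) : ℝ) * 2 = (K:ℝ) * ((K:ℝ) - 1) := by
            have h6 : ((K * (K-1) : ℕ) : ℝ) = (K:ℝ) * ((K:ℝ) - 1) := by
              push_cast [Nat.cast_sub (by omega : 1 ≤ K)]
              ring
            rw [← h6, ← hnat]
            push_cast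
            ring
          rw [← Finset.mul_sum, ← hcast]
          push_cast
          ring
        have h4 : ((K:ℝ) - 1) * ‖b K‖ ≤ (K:ℝ) * ((K:ℝ) - 1) := by
          rw [← h1, ← h3, hrecK]
          exact h2
        have h5 : (0:ℝ) < (K:ℝ) - 1 := by
          have : (2:ℝ) ≤ (K:ℝ) := by exact_mod_cast (by omega : 2 ≤ K)
          linarith
        nlinarith [norm_nonneg (b K)]
  -- conclusion
  have hkpos : (0:ℝ) < (k:ℝ) := by exact_mod_cast (by omega : 0 < k)
  have hbk : ‖b k‖ = (k:ℝ)^n * ‖a k‖ := by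
    rw [hbdef]
    simp only
    rw [norm_mul, norm_pow, Complex.norm_natCast]
  have hfin := hbound k
  rw [hbk] at hfin
  have hzp : (k:ℝ) ^ ((1:ℤ) - (n:ℤ)) = (k:ℝ) / (k:ℝ)^n := by
    rw [zpow_sub₀ (ne_of_gt hkpos), zpow_one, zpow_natCast]
  rw [hzp, le_div_iff₀ (pow_pos hkpos n)]
  calc ‖a k‖ * (k:ℝ)^n = (k:ℝ)^n * ‖a k‖ := mul_comm _ _
    _ ≤ (k:ℝ) := hfin
end

section
/- Let n ∈ ℕ and let f ∈ S_n be an odd function, with Taylor expansion f(z) = z + Σ_{k≥1} a_{2k+1} z^{2k+1}. Then for every positive integer k, |a_{2k+1}| ≤ (2k+1)^{−n}. -/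
open Metric Filter FormalMultilinearSeries intervalIntegral Set
open scoped ENNReal NNReal Real

namespace SalAux


lemma hasFPS {c : ℕ → ℂ} {F : ℂ → ℂ}
    (h : ∀ z ∈ Metric.ball (0 : ℂ) 1, HasSum (fun m => c m * z ^ m) (F z)) :
    HasFPowerSeriesOnBall F (ofScalars ℂ c) 0 1 := by
  have hrad : 1 ≤ (ofScalars ℂ c).radius := by
    refine ENNReal.le_of_forall_nnreal_lt (fun r hr => ?_)
    have hr1 : (r : ℝ) < 1 := by exact_mod_cast hr
    apply FormalMultilinearSeries.le_radius_of_tendsto (l := 0)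
    have hz : ((r : ℝ) : ℂ) ∈ Metric.ball (0 : ℂ) 1 := by
      simp only [mem_ball, dist_zero_right, Complex.norm_real, Real.norm_eq_abs]
      rwa [abs_of_nonneg r.coe_nonneg]
    have h0 := ((h _ hz).summable.tendsto_atTop_zero).norm
    simp only [norm_mul, norm_pow, Complex.norm_real, Real.norm_eq_abs,
      abs_of_nonneg r.coe_nonneg, norm_zero] at h0
    convert h0 using 2 with m
    rw [ofScalars_norm]
  have hball : Metric.eball (0 : ℂ) 1 = Metric.ball (0 : ℂ) 1 := by
    rw [show (1 : ℝ≥0∞) = ((1 : ℝ≥0) : ℝ≥0∞) by simp, Metric.emetric_ball_nnreal]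
    norm_num
  refine ⟨hrad, one_pos, fun {y} hy => ?_⟩
  rw [hball] at hy
  have := h y hy
  rw [zero_add]
  simpa only [ofScalars_apply_eq, smul_eq_mul] using this

lemma coeff_unique {c d : ℕ → ℂ} {F : ℂ → ℂ}
    (hc : ∀ z ∈ Metric.ball (0 : ℂ) 1, HasSum (fun m => c m * z ^ m) (F z))
    (hd : ∀ z ∈ Metric.ball (0 : ℂ) 1, HasSum (fun m => d m * z ^ m) (F z)) : c = d :=
  FormalMultilinearSeries.ofScalars_series_injective ℂ ℂ
    (((hasFPS hc).hasFPowerSeriesAt).eq_formalMultilinearSeries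
      ((hasFPS hd).hasFPowerSeriesAt))

lemma summable_norm {c : ℕ → ℂ} {F : ℂ → ℂ}
    (h : ∀ z ∈ Metric.ball (0 : ℂ) 1, HasSum (fun m => c m * z ^ m) (F z))
    {z : ℂ} (hz : z ∈ Metric.ball (0 : ℂ) 1) :
    Summable (fun m => ‖c m * z ^ m‖) := by
  have hrad := (hasFPS h).r_le
  have hlt : (‖z‖₊ : ℝ≥0∞) < (ofScalars ℂ c).radius := by
    refine lt_of_lt_of_le ?_ hrad
    rw [show (1 : ℝ≥0∞) = ((1 : ℝ≥0) : ℝ≥0∞) by simp]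
    rw [ENNReal.coe_lt_coe]
    simp only [mem_ball, dist_zero_right] at hz
    exact_mod_cast hz
  have := (ofScalars ℂ c).summable_norm_mul_pow hlt
  convert this using 2 with m
  rw [ofScalars_norm, norm_mul, norm_pow]
  simp [coe_nnnorm]



lemma caratheodory {P : ℂ → ℂ}
    (hd : DifferentiableOn ℂ P (Metric.ball (0 : ℂ) 1))
    (hre : ∀ z ∈ Metric.ball (0 : ℂ) 1, 0 ≤ (P z).re)
    (hP0 : P 0 = 1) :
    ∃ c : ℕ → ℂ, (∀ m, ‖c m‖ ≤ 2) ∧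
      ∀ z ∈ Metric.ball (0 : ℂ) 1, HasSum (fun m => c m * z ^ m) (P z) := by
  have hkey : ∀ r : ℝ, 0 < r → r < 1 →
      HasFPowerSeriesOnBall P (cauchyPowerSeries P 0 r) 0 (ENNReal.ofReal r) := by
    intro r h0 h1
    lift r to ℝ≥0 using h0.le
    have h0' : (0 : ℝ≥0) < r := by exact_mod_cast h0
    have := (hd.mono (closedBall_subset_ball (by exact_mod_cast h1))).hasFPowerSeriesOnBall h0'
    rw [ENNReal.ofReal_coe_nnreal]
    exact this
  have half : HasFPowerSeriesOnBall P (cauchyPowerSeries P 0 (1/2 : ℝ)) 0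
      (ENNReal.ofReal (1/2 : ℝ)) := hkey (1/2) (by norm_num) (by norm_num)
  set c : ℕ → ℂ := fun m => (cauchyPowerSeries P 0 (1/2 : ℝ)).coeff m with hc
  have heq : ∀ r : ℝ, 0 < r → r < 1 →
      cauchyPowerSeries P 0 r = cauchyPowerSeries P 0 (1/2 : ℝ) := fun r h0 h1 =>
    ((hkey r h0 h1).hasFPowerSeriesAt).eq_formalMultilinearSeries half.hasFPowerSeriesAt
  -- `c 0 = 1`
  have hc0 : c 0 = 1 := by
    have := half.coeff_zero 1
    rw [← hP0]
    exact this
  -- continuity of the boundary functions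
  have hmem : ∀ (r : ℝ), 0 < r → r < 1 → ∀ θ : ℝ, circleMap 0 r θ ∈ Metric.ball (0 : ℂ) 1 := by
    intro r h0 h1 θ
    simp only [mem_ball, dist_zero_right, norm_circleMap_zero]
    rwa [abs_of_pos h0]
  have hcont : ∀ (r : ℝ), 0 < r → r < 1 → Continuous (fun θ : ℝ => P (circleMap 0 r θ)) := by
    intro r h0 h1
    exact hd.continuousOn.comp_continuous (continuous_circleMap 0 r) (hmem r h0 h1)
  -- Main coefficient formula
  have key1 : ∀ (r : ℝ), 0 < r → r < 1 → ∀ m : ℕ,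
      (∫ θ in (0:ℝ)..(2*π), Complex.exp (-(m:ℂ) * θ * Complex.I) * P (circleMap 0 r θ))
        = 2 * (π:ℂ) * (r:ℂ)^m * c m := by
    intro r h0 h1 m
    have hrne : (r : ℂ) ≠ 0 := by exact_mod_cast h0.ne'
    have hcm : c m = (cauchyPowerSeries P 0 r).coeff m := by rw [heq r h0 h1]
    have step1 : (cauchyPowerSeries P 0 r).coeff m
        = (2 * (π:ℂ) * Complex.I)⁻¹ • ∫ θ in (0:ℝ)..(2*π),
            (circleMap 0 r θ * Complex.I) •
              ((circleMap 0 r θ)⁻¹ ^ m • ((circleMap 0 r θ)⁻¹ • P (circleMap 0 r θ))) := by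
      simp only [FormalMultilinearSeries.coeff, cauchyPowerSeries,
        ContinuousMultilinearMap.mkPiRing_apply, Pi.one_apply, Finset.prod_const_one, one_smul,
        circleIntegral, deriv_circleMap, sub_zero]
    have step2 : ∀ θ : ℝ, (circleMap 0 r θ * Complex.I) •
          ((circleMap 0 r θ)⁻¹ ^ m • ((circleMap 0 r θ)⁻¹ • P (circleMap 0 r θ)))
        = (Complex.I * ((r:ℂ)⁻¹)^m) *
            (Complex.exp (-(m:ℂ) * θ * Complex.I) * P (circleMap 0 r θ)) := by
      intro θ
      have he : Complex.exp (-(m:ℂ) * θ * Complex.I)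
          = ((Complex.exp ((θ:ℂ) * Complex.I))⁻¹) ^ m := by
        rw [← Complex.exp_neg, ← Complex.exp_nat_mul]
        ring_nf
      have hexpne : Complex.exp ((θ:ℂ) * Complex.I) ≠ 0 := Complex.exp_ne_zero _
      rw [he, circleMap_zero, smul_eq_mul, smul_eq_mul, smul_eq_mul]
      field_simp
      ring
    have hint : (∫ θ in (0:ℝ)..(2*π),
        (circleMap 0 r θ * Complex.I) •
          ((circleMap 0 r θ)⁻¹ ^ m • ((circleMap 0 r θ)⁻¹ • P (circleMap 0 r θ))))
        = (Complex.I * ((r:ℂ)⁻¹)^m) *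
            ∫ θ in (0:ℝ)..(2*π), Complex.exp (-(m:ℂ) * θ * Complex.I) * P (circleMap 0 r θ) := by
      rw [← intervalIntegral.integral_const_mul]
      exact intervalIntegral.integral_congr (fun θ _ => step2 θ)
    rw [step1, hint, smul_eq_mul] at hcm
    have hπ : (π : ℂ) ≠ 0 := by exact_mod_cast Real.pi_ne_zero
    rw [hcm]
    field_simp
    rw [one_div, inv_pow, mul_inv_cancel₀ (pow_ne_zero _ hrne), one_mul]
    exact intervalIntegral.integral_congr (fun θ _ => by ring_nf)
  -- vanishing of positive-index conjugate coefficients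
  have key2 : ∀ (r : ℝ), 0 < r → r < 1 → ∀ m : ℕ,
      (∫ θ in (0:ℝ)..(2*π), Complex.exp (((m:ℂ)+1) * θ * Complex.I) * P (circleMap 0 r θ)) = 0 := by
    intro r h0 h1 m
    have hrne : (r : ℂ) ≠ 0 := by exact_mod_cast h0.ne'
    have hsub : closedBall (0:ℂ) r ⊆ Metric.ball (0:ℂ) 1 := closedBall_subset_ball h1
    have hzero : (∮ z in C(0, r), z ^ m * P z) = 0 := by
      refine Complex.circleIntegral_eq_zero_of_differentiable_on_off_countable h0.le
        Set.countable_empty ((continuous_pow m).continuousOn.mul (hd.continuousOn.mono hsub))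
        (fun z hz => ?_)
      have hz1 : z ∈ Metric.ball (0:ℂ) 1 := ball_subset_ball h1.le hz.1
      exact (differentiableAt_pow m).mul (hd.differentiableAt (isOpen_ball.mem_nhds hz1))
    rw [circleIntegral] at hzero
    have step2 : ∀ θ : ℝ, deriv (circleMap 0 r) θ • (circleMap 0 r θ ^ m * P (circleMap 0 r θ))
        = (Complex.I * (r:ℂ)^(m+1)) *
            (Complex.exp (((m:ℂ)+1) * θ * Complex.I) * P (circleMap 0 r θ)) := by
      intro θ
      have he : Complex.exp (((m:ℂ)+1) * θ * Complex.I)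
          = (Complex.exp ((θ:ℂ) * Complex.I)) ^ (m+1) := by
        rw [← Complex.exp_nat_mul]
        push_cast
        try ring_nf
      rw [deriv_circleMap, he, circleMap_zero, smul_eq_mul]
      ring
    have hint : (∫ θ in (0:ℝ)..(2*π),
          deriv (circleMap 0 r) θ • (circleMap 0 r θ ^ m * P (circleMap 0 r θ)))
        = (Complex.I * (r:ℂ)^(m+1)) *
            ∫ θ in (0:ℝ)..(2*π), Complex.exp (((m:ℂ)+1) * θ * Complex.I) * P (circleMap 0 r θ) := by
      rw [← intervalIntegral.integral_const_mul]
      exact intervalIntegral.integral_congr (fun θ _ => step2 θ)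
    rw [hint] at hzero
    have hcoef : (Complex.I * (r:ℂ)^(m+1)) ≠ 0 :=
      mul_ne_zero Complex.I_ne_zero (pow_ne_zero _ hrne)
    exact (mul_eq_zero.mp hzero).resolve_left hcoef
  -- interval integral of a conjugate
  have conj_int : ∀ f : ℝ → ℂ, (∫ θ in (0:ℝ)..(2*π), (starRingEnd ℂ) (f θ))
      = (starRingEnd ℂ) (∫ θ in (0:ℝ)..(2*π), f θ) := by
    intro f
    simp only [intervalIntegral, ← integral_conj, map_sub]
  have key3 : ∀ (r : ℝ), 0 < r → r < 1 → ∀ m : ℕ,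
      (∫ θ in (0:ℝ)..(2*π), Complex.exp (-((m:ℂ)+1) * θ * Complex.I) *
        (starRingEnd ℂ) (P (circleMap 0 r θ))) = 0 := by
    intro r h0 h1 m
    have h := congrArg (starRingEnd ℂ) (key2 r h0 h1 m)
    rw [map_zero, ← conj_int] at h
    refine Eq.trans ?_ h
    refine intervalIntegral.integral_congr (fun θ _ => ?_)
    rw [map_mul, ← Complex.exp_conj]
    congr 2
    simp only [map_mul, map_add, Complex.conj_natCast, Complex.conj_ofReal, Complex.conj_I,
      map_one]
    ring
  -- mean value of the real part
  have key4 : ∀ (r : ℝ), 0 < r → r < 1 →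
      (∫ θ in (0:ℝ)..(2*π), (P (circleMap 0 r θ)).re) = 2 * π := by
    intro r h0 h1
    have h00 := key1 r h0 h1 0
    simp only [Nat.cast_zero, neg_zero, zero_mul, Complex.exp_zero, one_mul, pow_zero, mul_one,
      hc0] at h00
    have hInt : IntervalIntegrable (fun θ : ℝ => P (circleMap 0 r θ))
        MeasureTheory.volume 0 (2*π) := (hcont r h0 h1).intervalIntegrable 0 (2*π)
    have := Complex.reCLM.intervalIntegral_comp_comm hInt
    simp only [Complex.reCLM_apply] at this
    rw [this, h00]
    simp
  -- the key coefficient bound at radius r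
  have key5 : ∀ (r : ℝ), 0 < r → r < 1 → ∀ m : ℕ, ‖c m‖ * r ^ m ≤ 2 := by
    intro r h0 h1 m
    match m with
    | 0 =>
      simp [hc0]
    | Nat.succ t =>
      have hm : ((t:ℂ) + 1) = ((t+1 : ℕ) : ℂ) := by push_cast; ring
      have e1 := key1 r h0 h1 (t+1)
      have e3 := key3 r h0 h1 t
      have hcont1 : Continuous (fun θ : ℝ =>
          Complex.exp (-((t+1:ℕ):ℂ) * θ * Complex.I) * P (circleMap 0 r θ)) := by
        refine Continuous.mul ?_ (hcont r h0 h1)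
        exact Complex.continuous_exp.comp
          ((continuous_const.mul Complex.continuous_ofReal).mul continuous_const)
      have hcont2 : Continuous (fun θ : ℝ =>
          Complex.exp (-((t+1:ℕ):ℂ) * θ * Complex.I) *
            (starRingEnd ℂ) (P (circleMap 0 r θ))) := by
        refine Continuous.mul ?_ (Complex.continuous_conj.comp (hcont r h0 h1))
        exact Complex.continuous_exp.comp
          ((continuous_const.mul Complex.continuous_ofReal).mul continuous_const)
      rw [hm] at e3
      have e4 : (∫ θ in (0:ℝ)..(2*π), Complex.exp (-((t+1:ℕ):ℂ) * θ * Complex.I) *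
          (P (circleMap 0 r θ) + (starRingEnd ℂ) (P (circleMap 0 r θ))))
          = 2 * (π:ℂ) * (r:ℂ)^(t+1) * c (t+1) := by
        have : (fun θ : ℝ => Complex.exp (-((t+1:ℕ):ℂ) * θ * Complex.I) *
            (P (circleMap 0 r θ) + (starRingEnd ℂ) (P (circleMap 0 r θ))))
            = fun θ : ℝ => (Complex.exp (-((t+1:ℕ):ℂ) * θ * Complex.I) * P (circleMap 0 r θ))
              + Complex.exp (-((t+1:ℕ):ℂ) * θ * Complex.I) *
                  (starRingEnd ℂ) (P (circleMap 0 r θ)) := by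
          funext θ; ring
        rw [this, intervalIntegral.integral_add (hcont1.intervalIntegrable _ _)
          (hcont2.intervalIntegrable _ _), e1, e3, add_zero]
      -- now take norms
      have hexp1 : ∀ θ : ℝ, ‖Complex.exp (-((t+1:ℕ):ℂ) * θ * Complex.I)‖ = 1 := by
        intro θ
        have harg : (-((t+1:ℕ):ℂ) * θ * Complex.I)
            = ((-((t+1:ℕ):ℝ) * θ : ℝ) : ℂ) * Complex.I := by push_cast; ring
        rw [harg]
        exact Complex.norm_exp_ofReal_mul_I _
      have hnorm : ‖(2:ℂ) * (π:ℂ) * (r:ℂ)^(t+1) * c (t+1)‖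
          ≤ ∫ θ in (0:ℝ)..(2*π), 2 * (P (circleMap 0 r θ)).re := by
        rw [← e4]
        refine (intervalIntegral.norm_integral_le_integral_norm Real.two_pi_pos.le).trans_eq ?_
        refine intervalIntegral.integral_congr (fun θ _ => ?_)
        have h1' : P (circleMap 0 r θ) + (starRingEnd ℂ) (P (circleMap 0 r θ))
            = ((2 * (P (circleMap 0 r θ)).re : ℝ) : ℂ) := by
          rw [Complex.add_conj]
        rw [norm_mul, h1', hexp1 θ, one_mul, Complex.norm_real, Real.norm_eq_abs]
        refine abs_of_nonneg ?_
        have := hre _ (hmem r h0 h1 θ); linarith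
      have hItot : (∫ θ in (0:ℝ)..(2*π), 2 * (P (circleMap 0 r θ)).re) = 2 * (2 * π) := by
        rw [intervalIntegral.integral_const_mul, key4 r h0 h1]
      have hnormval : ‖(2:ℂ) * (π:ℂ) * (r:ℂ)^(t+1) * c (t+1)‖
          = 2 * π * r^(t+1) * ‖c (t+1)‖ := by
        simp only [norm_mul, norm_pow, Complex.norm_real, Real.norm_eq_abs]
        rw [abs_of_pos Real.pi_pos, abs_of_pos h0]
        norm_num
      rw [hItot] at hnorm
      rw [hnormval] at hnorm
      have hp := Real.pi_pos
      have hrp : (0:ℝ) < r ^ (t+1) := pow_pos h0 _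
      simp only [Nat.succ_eq_add_one]
      nlinarith [norm_nonneg (c (t+1)), hp, hnorm]
  -- uniform bound on the coefficients
  have hbound : ∀ m, ‖c m‖ ≤ 2 := by
    intro m
    have htend : Tendsto (fun r : ℝ => ‖c m‖ * r ^ m) (nhdsWithin 1 (Set.Iio 1))
        (nhds (‖c m‖ * 1 ^ m)) :=
      ((continuous_const.mul (continuous_pow m)).tendsto 1).mono_left nhdsWithin_le_nhds
    have hev : ∀ᶠ r : ℝ in nhdsWithin 1 (Set.Iio 1), ‖c m‖ * r ^ m ≤ 2 := by
      filter_upwards [Ioo_mem_nhdsLT_of_mem (Set.mem_Ioc.mpr ⟨zero_lt_one, le_refl (1:ℝ)⟩)]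
        with r hr
      exact key5 r hr.1 hr.2 m
    have := le_of_tendsto htend hev
    simpa using this
  -- the power series converges on the whole unit ball
  have hsum : ∀ z ∈ Metric.ball (0:ℂ) 1, HasSum (fun m => c m * z ^ m) (P z) := by
    intro z hz
    rw [mem_ball, dist_zero_right] at hz
    obtain ⟨r, hr1, hr2⟩ := exists_between hz
    have hr0 : 0 < r := lt_of_le_of_lt (norm_nonneg z) hr1
    have hk := hkey r hr0 hr2
    have hz' : z ∈ Metric.eball (0:ℂ) (ENNReal.ofReal r) := by
      rw [Metric.mem_eball, edist_zero_right, ← ofReal_norm]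
      exact (ENNReal.ofReal_lt_ofReal_iff hr0).mpr hr1
    have hs := hk.hasSum hz'
    rw [zero_add, heq r hr0 hr2] at hs
    convert hs using 2 with m
    rfl
    rw [FormalMultilinearSeries.apply_eq_pow_smul_coeff, smul_eq_mul, mul_comm]
  exact ⟨c, hbound, hsum⟩




lemma sum_ite_odd (N : ℕ) :
    ∑ i ∈ Finset.range (2*N+1), (if Odd i then (2:ℝ) else 0) = 2*N := by
  induction N with
  | zero => simp
  | succ N ih =>
    have h : 2*(N+1)+1 = (2*N+1) + 1 + 1 := by ring
    rw [h, Finset.sum_range_succ, Finset.sum_range_succ, ih]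
    have h1 : Odd (2*N+1) := odd_two_mul_add_one N
    have h2 : ¬ Odd (2*N+1+1) := by simp [Nat.even_add_one, parity_simps]
    rw [if_pos h1, if_neg h2]
    push_cast; ring


end SalAux


open SalAux in
/-- Corollary 3.4: If f ∈ Sₙ is odd, then |a_{2k+1}| ≤ (2k+1)^{−n} for every
positive integer k. -/
theorem salagean_odd_coeff_bound
    (n : ℕ) (f Dn Dn1 : ℂ → ℂ) (a : ℕ → ℂ)
    (ha0 : a 0 = 0) (ha1 : a 1 = 1)
    (hf : ∀ z ∈ Metric.ball (0 : ℂ) 1, HasSum (fun k => a k * z ^ k) (f z))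
    (hodd : ∀ z ∈ Metric.ball (0 : ℂ) 1, f (-z) = -f z)
    (hDn : ∀ z ∈ Metric.ball (0 : ℂ) 1,
      HasSum (fun k : ℕ => (k : ℂ) ^ n * a k * z ^ k) (Dn z))
    (hDn1 : ∀ z ∈ Metric.ball (0 : ℂ) 1,
      HasSum (fun k : ℕ => (k : ℂ) ^ (n + 1) * a k * z ^ k) (Dn1 z))
    (hne : ∀ z ∈ Metric.ball (0 : ℂ) 1, z ≠ 0 → Dn z ≠ 0)
    (hre : ∀ z ∈ Metric.ball (0 : ℂ) 1, z ≠ 0 → 0 < (Dn1 z / Dn z).re)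
    (k : ℕ) (hk : 1 ≤ k) :
    ‖a (2 * k + 1)‖ ≤ ((2 * k + 1 : ℕ) : ℝ) ^ (-(n : ℤ)) := by
  classical
  set b : ℕ → ℂ := fun m => (m : ℂ) ^ n * a m with hbdef
  have hb : ∀ z ∈ Metric.ball (0:ℂ) 1, HasSum (fun m => b m * z ^ m) (Dn z) := hDn
  have hb1 : ∀ z ∈ Metric.ball (0:ℂ) 1,
      HasSum (fun (m : ℕ) => ((m:ℂ) * b m) * z ^ m) (Dn1 z) := by
    intro z hz
    have h := hDn1 z hz
    convert h using 2 with m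
    simp only [hbdef, pow_succ]
    ring
  have h01 : (0:ℂ) ∈ Metric.ball (0:ℂ) 1 := by simp
  -- odd coefficients only
  have heven : ∀ m : ℕ, Even m → a m = 0 := by
    have h1 : ∀ z ∈ Metric.ball (0:ℂ) 1,
        HasSum (fun m => (a m * (-1)^m) * z ^ m) (-(f z)) := by
      intro z hz
      have hzneg : -z ∈ Metric.ball (0:ℂ) 1 := by
        simpa [mem_ball, dist_zero_right] using hz
      have h := hf (-z) hzneg
      rw [hodd z hz] at h
      convert h using 2 with m
      rw [neg_pow]
      ring
    have h2 : ∀ z ∈ Metric.ball (0:ℂ) 1,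
        HasSum (fun m => (-(a m)) * z ^ m) (-(f z)) := by
      intro z hz
      have h := (hf z hz).neg
      convert h using 2 with m
      rfl
      ring
    have hfun := coeff_unique h1 h2
    intro m hm
    have h := congrFun hfun m
    rw [hm.neg_one_pow, mul_one] at h
    have h2 : (2:ℂ) * a m = 0 := by linear_combination h
    simpa using h2
  have hbeven : ∀ m : ℕ, Even m → b m = 0 := by
    intro m hm
    simp [hbdef, heven m hm]
  have hb1' : b 1 = 1 := by simp [hbdef, ha1]
  have hb0 : b 0 = 0 := by simp [hbdef, ha0]
  -- values at the origin
  have hDn0 : Dn 0 = 0 := by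
    have h := hb 0 h01
    have h2 : HasSum (fun m => b m * (0:ℂ) ^ m) (b 0 * (0:ℂ)^0) := by
      refine hasSum_single 0 (fun m hm => ?_)
      rw [zero_pow hm, mul_zero]
    have := h.unique h2
    rw [this, hb0]
    simp
  have hDn1_0 : Dn1 0 = 0 := by
    have h := hb1 0 h01
    have h2 : HasSum (fun (m : ℕ) => ((m:ℂ) * b m) * (0:ℂ) ^ m)
        (((0:ℕ):ℂ) * b 0 * (0:ℂ)^0) := by
      refine hasSum_single 0 (fun m hm => ?_)
      rw [zero_pow hm, mul_zero]
    have := h.unique h2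
    rw [this]
    simp
  -- the functions Dn z / z and Dn1 z / z extended over the origin
  set g1 : ℂ → ℂ := fun z => if z = 0 then 1 else Dn z / z with hg1def
  set B1 : ℂ → ℂ := fun z => if z = 0 then 1 else Dn1 z / z with hB1def
  have hg1 : ∀ z ∈ Metric.ball (0:ℂ) 1, HasSum (fun m => b (m+1) * z ^ m) (g1 z) := by
    intro z hz
    by_cases hz0 : z = 0
    · subst hz0
      have h2 : HasSum (fun m => b (m+1) * (0:ℂ) ^ m) (b 1 * (0:ℂ)^0) := by
        refine hasSum_single 0 (fun m hm => ?_)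
        rw [zero_pow hm, mul_zero]
      simp only [hg1def, if_pos rfl]
      simpa [hb1'] using h2
    · have h := (hasSum_nat_add_iff' (f := fun m => b m * z ^ m) 1).mpr (hb z hz)
      simp only [Finset.range_one, Finset.sum_singleton, hb0, zero_mul, sub_zero] at h
      have h2 := h.mul_right z⁻¹
      have hfn : (fun m => b (m+1) * z ^ (m+1) * z⁻¹) = fun m => b (m+1) * z ^ m := by
        funext m
        rw [pow_succ]
        field_simp
      rw [hfn] at h2
      simp only [hg1def, if_neg hz0]
      rw [div_eq_mul_inv]
      exact h2
  have hB1s : ∀ z ∈ Metric.ball (0:ℂ) 1,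
      HasSum (fun (m : ℕ) => (((m:ℂ)+1) * b (m+1)) * z ^ m) (B1 z) := by
    intro z hz
    by_cases hz0 : z = 0
    · subst hz0
      have h2 : HasSum (fun (m : ℕ) => (((m:ℂ)+1) * b (m+1)) * (0:ℂ) ^ m)
          ((((0:ℕ):ℂ)+1) * b 1 * (0:ℂ)^0) := by
        refine hasSum_single 0 (fun m hm => ?_)
        rw [zero_pow hm, mul_zero]
      simp only [hB1def, if_pos rfl]
      simpa [hb1'] using h2
    · have h := (hasSum_nat_add_iff' (f := fun (m : ℕ) => ((m:ℂ) * b m) * z ^ m) 1).mpr (hb1 z hz)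
      simp only [Finset.range_one, Finset.sum_singleton, hb0, zero_mul, mul_zero, sub_zero] at h
      have h2 := h.mul_right z⁻¹
      have hfn : (fun m => (((m+1:ℕ):ℂ) * b (m+1)) * z ^ (m+1) * z⁻¹)
          = fun (m : ℕ) => (((m:ℂ)+1) * b (m+1)) * z ^ m := by
        funext m
        rw [pow_succ]
        push_cast
        field_simp
      rw [hfn] at h2
      simp only [hB1def, if_neg hz0]
      rw [div_eq_mul_inv]
      exact h2
  -- analyticity of the two quotients
  have hball : Metric.eball (0 : ℂ) 1 = Metric.ball (0 : ℂ) 1 := by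
    rw [show (1 : ℝ≥0∞) = ((1 : ℝ≥0) : ℝ≥0∞) by simp, Metric.emetric_ball_nnreal]
    norm_num
  have hg1d : DifferentiableOn ℂ g1 (Metric.ball (0:ℂ) 1) := by
    have := (hasFPS hg1).analyticOnNhd
    rw [hball] at this
    exact this.differentiableOn
  have hB1d : DifferentiableOn ℂ B1 (Metric.ball (0:ℂ) 1) := by
    have := (hasFPS hB1s).analyticOnNhd
    rw [hball] at this
    exact this.differentiableOn
  have hg1ne : ∀ z ∈ Metric.ball (0:ℂ) 1, g1 z ≠ 0 := by
    intro z hz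
    by_cases hz0 : z = 0
    · simp [hg1def, hz0]
    · simp only [hg1def, if_neg hz0]
      exact div_ne_zero (hne z hz hz0) hz0
  set P : ℂ → ℂ := fun z => B1 z / g1 z with hPdef
  have hPd : DifferentiableOn ℂ P (Metric.ball (0:ℂ) 1) := hB1d.div hg1d hg1ne
  have hPz : ∀ z ∈ Metric.ball (0:ℂ) 1, z ≠ 0 → P z = Dn1 z / Dn z := by
    intro z hz hz0
    simp only [hPdef, hg1def, hB1def, if_neg hz0]
    rw [div_div_div_cancel_right₀]
    exact hz0
  have hP0 : P 0 = 1 := by simp [hPdef, hg1def, hB1def]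
  have hPre : ∀ z ∈ Metric.ball (0:ℂ) 1, 0 ≤ (P z).re := by
    intro z hz
    by_cases hz0 : z = 0
    · subst hz0; rw [hP0]; norm_num
    · rw [hPz z hz hz0]; exact (hre z hz hz0).le
  obtain ⟨p, hp2, hpsum⟩ := caratheodory hPd hPre hP0
  have hp0 : p 0 = 1 := by
    have h := hpsum 0 h01
    have h2 : HasSum (fun m => p m * (0:ℂ) ^ m) (p 0 * (0:ℂ)^0) := by
      refine hasSum_single 0 (fun m hm => ?_)
      rw [zero_pow hm, mul_zero]
    have := h.unique h2
    rw [hP0] at this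
    simpa using this.symm
  -- Cauchy product
  have hprod : ∀ z ∈ Metric.ball (0:ℂ) 1, HasSum
      (fun m => (∑ i ∈ Finset.range (m+1), p i * b (m - i)) * z ^ m) (Dn1 z) := by
    intro z hz
    have sp : Summable (fun m => ‖p m * z ^ m‖) := summable_norm hpsum hz
    have sb : Summable (fun m => ‖b m * z ^ m‖) := summable_norm hb hz
    have hs3 := summable_norm_sum_mul_range_of_summable_norm sp sb
    have hs3' : Summable (fun m => ∑ i ∈ Finset.range (m+1),
        (p i * z^i) * (b (m-i) * z^(m-i))) := hs3.of_norm
    have ht := tsum_mul_tsum_eq_tsum_sum_range_of_summable_norm sp sb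
    rw [(hpsum z hz).tsum_eq, (hb z hz).tsum_eq] at ht
    have hPDn : P z * Dn z = Dn1 z := by
      by_cases hz0 : z = 0
      · subst hz0; rw [hDn0, hDn1_0]; ring
      · rw [hPz z hz hz0]
        exact div_mul_cancel₀ (Dn1 z) (hne z hz hz0)
    have hhs : HasSum (fun m => ∑ i ∈ Finset.range (m+1),
        (p i * z^i) * (b (m-i) * z^(m-i))) (Dn1 z) := by
      have h := hs3'.hasSum
      rw [← ht, hPDn] at h
      exact h
    convert hhs using 2 with m
    rw [Finset.sum_mul]
    refine Finset.sum_congr rfl (fun i hi => ?_)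
    have him : i ≤ m := Nat.lt_succ_iff.mp (Finset.mem_range.mp hi)
    have hzp : z ^ m = z^i * z^(m-i) := by
      rw [← pow_add, Nat.add_sub_cancel' him]
    rw [hzp]
    ring
  have hcoeff : (fun (m : ℕ) => (m:ℂ) * b m)
      = fun m => ∑ i ∈ Finset.range (m+1), p i * b (m - i) :=
    coeff_unique hb1 hprod
  -- strong induction: all odd coefficients of g are bounded by 1
  have hmain : ∀ j : ℕ, ‖b (2*j+1)‖ ≤ 1 := by
    intro j
    induction j using Nat.strong_induction_on with
    | _ j IH =>
      rcases j with _ | j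
      · simp [hb1']
      · have hrec := congrFun hcoeff (2*(j+1)+1)
        rw [Finset.sum_range_succ'] at hrec
        simp only [hp0, Nat.sub_zero, one_mul] at hrec
        -- move the i = 0 term to the left
        have hrec2 : (((2*(j+1):ℕ)):ℂ) * b (2*(j+1)+1)
            = ∑ i ∈ Finset.range (2*(j+1)+1), p (i+1) * b (2*(j+1)+1 - (i+1)) := by
          push_cast
          push_cast at hrec
          linear_combination hrec
        -- bound each term
        have hterm : ∀ i ∈ Finset.range (2*(j+1)+1),
            ‖p (i+1) * b (2*(j+1)+1 - (i+1))‖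
              ≤ (if Odd (2*(j+1) - i) then (2:ℝ) else 0) := by
          intro i hi
          have hidx : 2*(j+1)+1 - (i+1) = 2*(j+1) - i := by omega
          rw [hidx]
          by_cases hq : Odd (2*(j+1) - i)
          · rw [if_pos hq]
            obtain ⟨t, ht⟩ := hq
            have htj : t < j + 1 := by omega
            rw [norm_mul, ht]
            have h1 : ‖b (2*t+1)‖ ≤ 1 := IH t htj
            calc ‖p (i+1)‖ * ‖b (2*t+1)‖ ≤ 2 * 1 :=
                  mul_le_mul (hp2 (i+1)) h1 (norm_nonneg _) (by norm_num)
              _ = 2 := by norm_num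
          · rw [if_neg hq]
            have : b (2*(j+1) - i) = 0 :=
              hbeven _ (Nat.not_odd_iff_even.mp hq)
            rw [this, mul_zero, norm_zero]
        have hsumb : ∑ i ∈ Finset.range (2*(j+1)+1),
            (if Odd (2*(j+1) - i) then (2:ℝ) else 0) = 2*(j+1) := by
          have hrefl := Finset.sum_range_reflect
            (fun i => if Odd i then (2:ℝ) else 0) (2*(j+1)+1)
          have h2 : ∀ i ∈ Finset.range (2*(j+1)+1),
              (if Odd (2*(j+1)+1-1 - i) then (2:ℝ) else 0)
                = (if Odd (2*(j+1) - i) then (2:ℝ) else 0) := by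
            intro i hi
            have hidx : 2*(j+1)+1-1 - i = 2*(j+1) - i := by omega
            rw [hidx]
          rw [Finset.sum_congr rfl h2] at hrefl
          rw [hrefl]
          exact_mod_cast sum_ite_odd (j+1)
        have hnormb : ‖∑ i ∈ Finset.range (2*(j+1)+1),
            p (i+1) * b (2*(j+1)+1 - (i+1))‖ ≤ 2*(j+1) := by
          refine (norm_sum_le _ _).trans ?_
          rw [← hsumb]
          exact Finset.sum_le_sum hterm
        rw [← hrec2] at hnormb
        rw [norm_mul, Complex.norm_natCast] at hnormb
        have hpos : (0:ℝ) < ((2*(j+1):ℕ):ℝ) := by positivity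
        have : ((2*(j+1):ℕ):ℝ) = 2*((j:ℝ)+1) := by push_cast; ring
        rw [this] at hnormb hpos
        nlinarith [norm_nonneg (b (2*(j+1)+1))]
  -- conclusion
  have hfin := hmain k
  have hbk : ‖b (2*k+1)‖ = ((2*k+1:ℕ):ℝ)^n * ‖a (2*k+1)‖ := by
    rw [hbdef]
    simp only [norm_mul, norm_pow, Complex.norm_natCast]
  rw [hbk] at hfin
  have hpos : (0:ℝ) < ((2*k+1:ℕ):ℝ)^n := by positivity
  rw [zpow_neg, zpow_natCast, inv_eq_one_div, le_div_iff₀ hpos]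
  linarith
end
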